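/- arXiv:1005.0336 — 4 statements merged into one kernel-verified Lean document; each statement's English description precedes it below -/
import Mathlib

section
/- Let h_n(x) = a(x−x_1)⋯(x−x_n) and g_n(x) = b(x−ζ_1)⋯(x−ζ_n) be real polynomials with real and simple zeros, where a, b > 0, and suppose the zeros interlace as ζ_1 < x_1 < ζ_2 < x_2 < ⋯ < ζ_n < x_n. Then for every real constant c > 0 the polynomial f(x) = h_n(x) + c·g_n(x) has n real simple zeros η_1 < ⋯ < η_n satisfying ζ_1 < η_1 < x_1 < ζ_2 < η_2 < x_2 < ⋯ < ζ_n < η_n < x_n. Moreover each η_k = η_k(c) is a strictly decreasing function of c, and for each k = 1,…,n one has lim_{c→∞} η_k(c) = ζ_k and lim_{c→∞} c·[η_k(c) − ζ_k] = −h_n(ζ_k)/g_n′(ζ_k). -/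
open Polynomial Filter Topology

lemma aux_prod_neg (s : Finset ℕ) (u : ℕ → ℝ) :
    ∏ j ∈ s, u j = (-1 : ℝ) ^ s.card * ∏ j ∈ s, (-u j) := by
  have : ∀ j ∈ s, u j = (-1 : ℝ) * (-u j) := by intros; ring
  rw [Finset.prod_congr rfl this, Finset.prod_mul_distrib, Finset.prod_const]

lemma aux_prod_sign {n k : ℕ} (hkn : k ≤ n) (u : ℕ → ℝ)
    (hpos : ∀ j < k, 0 < u j) (hneg : ∀ j, k ≤ j → j < n → u j < 0) :
    0 < (-1 : ℝ) ^ (n - k) * ∏ j ∈ Finset.range n, u j := by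
  rw [← Finset.prod_range_mul_prod_Ico u hkn]
  have h1 : 0 < ∏ j ∈ Finset.range k, u j :=
    Finset.prod_pos fun j hj => hpos j (Finset.mem_range.1 hj)
  have h2 : (0:ℝ) < (-1 : ℝ) ^ (n - k) * ∏ j ∈ Finset.Ico k n, u j := by
    rw [aux_prod_neg, ← mul_assoc, Nat.card_Ico, ← mul_pow]
    simp only [neg_one_mul, neg_neg, one_pow, one_mul]
    exact Finset.prod_pos fun j hj => by
      have := Finset.mem_Ico.1 hj
      linarith [hneg j this.1 this.2]
  calc (0:ℝ) < (∏ j ∈ Finset.range k, u j) * ((-1 : ℝ) ^ (n - k) * ∏ j ∈ Finset.Ico k n, u j) :=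
        mul_pos h1 h2
    _ = (-1 : ℝ) ^ (n - k) * ((∏ j ∈ Finset.range k, u j) * ∏ j ∈ Finset.Ico k n, u j) := by ring

lemma aux_prod_sign2 {n k : ℕ} (hkn : k ≤ n) {a : ℝ} (ha : 0 < a) (u : ℕ → ℝ)
    (hpos : ∀ j < k, 0 < u j) (hneg : ∀ j, k ≤ j → j < n → u j < 0) :
    0 < (-1 : ℝ) ^ (n - k) * (a * ∏ j ∈ Finset.range n, u j) := by
  have h1 := aux_prod_sign hkn u hpos hneg
  calc (0:ℝ) < a * ((-1 : ℝ) ^ (n - k) * ∏ j ∈ Finset.range n, u j) := mul_pos ha h1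
    _ = _ := by ring

lemma aux_monic (n : ℕ) (y : ℕ → ℝ) : (∏ j ∈ Finset.range n, (X - C (y j))).Monic :=
  monic_prod_of_monic _ _ fun j _ => monic_X_sub_C (y j)

lemma aux_deg (n : ℕ) (y : ℕ → ℝ) : (∏ j ∈ Finset.range n, (X - C (y j))).natDegree = n := by
  rw [natDegree_prod _ _ fun j _ => X_sub_C_ne_zero (y j)]
  simp [natDegree_X_sub_C]

lemma aux_coeff (n : ℕ) (y : ℕ → ℝ) : (∏ j ∈ Finset.range n, (X - C (y j))).coeff n = 1 := by
  have h1 := (aux_monic n y).coeff_natDegree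
  rwa [aux_deg] at h1

/-- Zeros of `f = h + c·g` when the zeros of `g` interlace those of `h`
from the left: `ζ₁ < x₁ < ζ₂ < x₂ < ⋯ < ζₙ < xₙ`.  For every `c > 0` the polynomial
`f` factors with `n` real simple zeros `η_k(c)` satisfying
`ζ_k < η_k(c) < x_k`; each `η_k` is strictly decreasing in `c`,
`η_k(c) → ζ_k` as `c → ∞`, and `c·(η_k(c) − ζ_k) → −h(ζ_k)/g'(ζ_k)`. -/
theorem stmt_0 (n : ℕ) (hn : 0 < n) (a b : ℝ) (ha : 0 < a) (hb : 0 < b)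
    (x ζ : ℕ → ℝ) (h g : Polynomial ℝ)
    (hh : h = C a * ∏ k ∈ Finset.range n, (X - C (x k)))
    (hg : g = C b * ∏ k ∈ Finset.range n, (X - C (ζ k)))
    (hint1 : ∀ k < n, ζ k < x k)
    (hint2 : ∀ k, k + 1 < n → x k < ζ (k + 1)) :
    ∃ η : ℝ → ℕ → ℝ,
      (∀ c : ℝ, 0 < c →
        (h + C c * g = C (a + c * b) * ∏ k ∈ Finset.range n, (X - C (η c k))) ∧
        (∀ k < n, ζ k < η c k ∧ η c k < x k) ∧
        (∀ k, k + 1 < n → η c k < η c (k + 1))) ∧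
      (∀ k < n, StrictAntiOn (fun c => η c k) (Set.Ioi (0 : ℝ))) ∧
      (∀ k < n, Tendsto (fun c => η c k) atTop (𝓝 (ζ k))) ∧
      (∀ k < n, Tendsto (fun c => c * (η c k - ζ k)) atTop
        (𝓝 (-(h.eval (ζ k)) / (derivative g).eval (ζ k)))) := by
  classical
  -- chain facts
  have hxz : ∀ j, j < n → ∀ i, i < j → x i < ζ j := by
    intro j
    induction j with
    | zero => intro _ i hi; omega
    | succ m ih =>
      intro hjn i hij
      rcases Nat.lt_succ_iff_lt_or_eq.1 hij with hlt | rfl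
      · exact lt_trans (lt_trans (ih (by omega) i hlt) (hint1 m (by omega))) (hint2 m hjn)
      · exact hint2 i hjn
  have hzz : ∀ i j : ℕ, i ≤ j → j < n → ζ i ≤ ζ j := by
    intro i j hij hjn
    rcases eq_or_lt_of_le hij with rfl | hlt
    · exact le_refl _
    · exact le_of_lt (lt_trans (hint1 i (lt_trans hlt hjn)) (hxz j hjn i hlt))
  -- eval formulas
  have hevalh : ∀ t : ℝ, h.eval t = a * ∏ j ∈ Finset.range n, (t - x j) := by
    intro t; simp [hh, eval_prod]
  have hevalg : ∀ t : ℝ, g.eval t = b * ∏ j ∈ Finset.range n, (t - ζ j) := by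
    intro t; simp [hg, eval_prod]
  have hgz : ∀ k, k < n → g.eval (ζ k) = 0 := by
    intro k hk
    rw [hevalg, Finset.prod_eq_zero (Finset.mem_range.2 hk) (sub_self (ζ k)), mul_zero]
  have hhx : ∀ k, k < n → h.eval (x k) = 0 := by
    intro k hk
    rw [hevalh, Finset.prod_eq_zero (Finset.mem_range.2 hk) (sub_self (x k)), mul_zero]
  -- sign relation
  have hS : ∀ k, k < n → ((-1:ℝ)^(n-k)) = -((-1:ℝ)^(n-(k+1))) := by
    intro k hk
    have hnk : n - k = (n - (k+1)) + 1 := by omega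
    rw [hnk, pow_succ]; ring
  -- sign of h at ζ k
  have sgnh : ∀ k, k < n → 0 < (-1:ℝ)^(n-k) * h.eval (ζ k) := by
    intro k hk
    rw [hevalh]
    refine aux_prod_sign2 (le_of_lt hk) ha _ ?_ ?_
    · intro j hj
      have h1 := hxz k hk j hj
      linarith
    · intro j hj1 hj2
      have h1 : ζ k < x k := hint1 k hk
      have h2 : x k ≤ x j := by
        rcases eq_or_lt_of_le hj1 with rfl | hlt
        · exact le_refl _
        · exact le_of_lt (lt_trans (hxz j hj2 k hlt) (hint1 j hj2))
      linarith
  -- sign of g on (ζ k, x k]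
  have sgng : ∀ k, k < n → ∀ t, ζ k < t → t ≤ x k → 0 < (-1:ℝ)^(n-(k+1)) * g.eval t := by
    intro k hk t h1 h2
    rw [hevalg]
    refine aux_prod_sign2 (by omega) hb _ ?_ ?_
    · intro j hj
      have := hzz j k (by omega) hk
      linarith
    · intro j hj1 hj2
      have := hxz j hj2 k (by omega)
      linarith
  -- existence of a root in each interval
  have key : ∀ c : ℝ, 0 < c → ∀ k, k < n →
      ∃ t, t ∈ Set.Ioo (ζ k) (x k) ∧ (h + C c * g).eval t = 0 := by
    intro c hc k hk
    have hfz : 0 < (-1:ℝ)^(n-k) * (h + C c * g).eval (ζ k) := by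
      have he : (h + C c * g).eval (ζ k) = h.eval (ζ k) := by
        simp [hgz k hk]
      rw [he]; exact sgnh k hk
    have hfx : (-1:ℝ)^(n-k) * (h + C c * g).eval (x k) < 0 := by
      have he : (h + C c * g).eval (x k) = c * g.eval (x k) := by
        simp [hhx k hk]
      have hgx := sgng k hk (x k) (hint1 k hk) (le_refl _)
      rw [he, hS k hk]
      nlinarith
    have hcont : ContinuousOn (fun t : ℝ => (-1:ℝ)^(n-k) * (h + C c * g).eval t)
        (Set.Icc (ζ k) (x k)) :=
      (continuous_const.mul (h + C c * g).continuous).continuousOn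
    have h0 : (0:ℝ) ∈ Set.Ioo ((-1:ℝ)^(n-k) * (h + C c * g).eval (x k))
        ((-1:ℝ)^(n-k) * (h + C c * g).eval (ζ k)) := ⟨hfx, hfz⟩
    obtain ⟨t, ht, hteq⟩ := intermediate_value_Ioo' (le_of_lt (hint1 k hk)) hcont h0
    refine ⟨t, ht, ?_⟩
    have hs0 : ((-1:ℝ)^(n-k)) ≠ 0 := pow_ne_zero _ (by norm_num)
    exact (mul_eq_zero.1 hteq).resolve_left hs0
  have exR : ∀ c : ℝ, ∀ k : ℕ, ∃ t : ℝ,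
      (0 < c ∧ k < n) → (t ∈ Set.Ioo (ζ k) (x k) ∧ (h + C c * g).eval t = 0) := by
    intro c k
    by_cases hck : 0 < c ∧ k < n
    · obtain ⟨t, ht⟩ := key c hck.1 k hck.2
      exact ⟨t, fun _ => ht⟩
    · exact ⟨0, fun hcc => absurd hcc hck⟩
  choose η hη using exR
  have hmem : ∀ c : ℝ, 0 < c → ∀ k, k < n → η c k ∈ Set.Ioo (ζ k) (x k) :=
    fun c hc k hk => (hη c k ⟨hc, hk⟩).1
  have hroot : ∀ c : ℝ, 0 < c → ∀ k, k < n → (h + C c * g).eval (η c k) = 0 :=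
    fun c hc k hk => (hη c k ⟨hc, hk⟩).2
  have hηlt : ∀ c : ℝ, 0 < c → ∀ i j, i < j → j < n → η c i < η c j := by
    intro c hc i j hij hjn
    have h1 := hmem c hc i (lt_trans hij hjn)
    have h2 := hmem c hc j hjn
    have h3 := hxz j hjn i hij
    have := h1.2; have := h2.1
    linarith
  -- factorization
  have hfact : ∀ c : ℝ, 0 < c →
      h + C c * g = C (a + c * b) * ∏ k ∈ Finset.range n, (X - C (η c k)) := by
    intro c hc
    set f : Polynomial ℝ := h + C c * g with hf
    set R : Polynomial ℝ := C (a + c * b) * ∏ k ∈ Finset.range n, (X - C (η c k)) with hR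
    have hab : (0:ℝ) < a + c * b := by nlinarith
    have hfcoeff : f.coeff n = a + c * b := by
      rw [hf, hh, hg, coeff_add, coeff_C_mul, coeff_C_mul, coeff_C_mul,
        aux_coeff n x, aux_coeff n ζ]
      ring
    have hfne : f ≠ 0 := fun h0 => by
      rw [h0] at hfcoeff; simp at hfcoeff; nlinarith
    have hfdeg : f.natDegree = n := by
      refine le_antisymm ?_ (le_natDegree_of_ne_zero (by rw [hfcoeff]; positivity))
      refine le_trans (natDegree_add_le _ _) (max_le ?_ ?_)
      · rw [hh]
        exact le_trans (natDegree_C_mul_le _ _) (le_of_eq (aux_deg n x))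
      · rw [hg]
        exact le_trans (natDegree_C_mul_le _ _)
          (le_trans (natDegree_C_mul_le _ _) (le_of_eq (aux_deg n ζ)))
    have hRne : R ≠ 0 :=
      mul_ne_zero (C_ne_zero.2 (ne_of_gt hab)) (aux_monic n (η c)).ne_zero
    have hRdeg : R.natDegree = n := by
      rw [hR, natDegree_C_mul (ne_of_gt hab), aux_deg]
    have hflc : f.leadingCoeff = a + c * b := by
      rw [leadingCoeff, hfdeg, hfcoeff]
    have hRlc : R.leadingCoeff = a + c * b := by
      rw [hR, leadingCoeff_mul, leadingCoeff_C, (aux_monic n (η c)).leadingCoeff, mul_one]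
    have hsub : f - R = 0 := by
      by_cases hD : f - R = 0
      · exact hD
      · have hdd : f.degree = R.degree := by
          rw [degree_eq_natDegree hfne, degree_eq_natDegree hRne, hfdeg, hRdeg]
        have hlt : (f - R).degree < f.degree := degree_sub_lt hdd hfne (by rw [hflc, hRlc])
        have hlt' : (f - R).natDegree < n := by
          refine (natDegree_lt_iff_degree_lt hD).2 ?_
          rw [← hfdeg, ← degree_eq_natDegree hfne]
          exact hlt
        exfalso
        apply hD
        refine eq_zero_of_natDegree_lt_card_of_eval_eq_zero' _
          ((Finset.range n).image (η c)) ?_ ?_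
        · intro t htm
          obtain ⟨j, hj, rfl⟩ := Finset.mem_image.1 htm
          have hjn := Finset.mem_range.1 hj
          have hRval : R.eval (η c j) = 0 := by
            rw [hR, eval_mul, eval_prod,
              Finset.prod_eq_zero hj (by simp : ((X : Polynomial ℝ) - C (η c j)).eval (η c j) = 0),
              mul_zero]
          rw [eval_sub, hroot c hc j hjn, hRval, sub_zero]
        · have hcard : ((Finset.range n).image (η c)).card = n := by
            rw [Finset.card_image_of_injOn, Finset.card_range]
            intro i hi j hj hij
            by_contra hne
            rcases lt_or_gt_of_ne hne with hlt2 | hlt2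
            · exact absurd hij (ne_of_lt (hηlt c hc i j hlt2 (Finset.mem_range.1 hj)))
            · exact absurd hij.symm (ne_of_lt (hηlt c hc j i hlt2 (Finset.mem_range.1 hi)))
          rw [hcard]; exact hlt'
    have := sub_eq_zero.1 hsub
    rw [hf] at this
    exact this
  have hevalf : ∀ c : ℝ, 0 < c → ∀ t : ℝ,
      (h + C c * g).eval t = (a + c * b) * ∏ j ∈ Finset.range n, (t - η c j) := by
    intro c hc t
    rw [hfact c hc]; simp [eval_prod]
  -- sign of f between roots
  have sgnf_high : ∀ c : ℝ, 0 < c → ∀ k, k < n → ∀ t, η c k < t → t ≤ x k →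
      0 < (-1:ℝ)^(n-(k+1)) * (h + C c * g).eval t := by
    intro c hc k hk t h1 h2
    rw [hevalf c hc t]
    have hab : (0:ℝ) < a + c * b := by nlinarith
    refine aux_prod_sign2 (by omega) hab _ ?_ ?_
    · intro j hj
      rcases Nat.lt_succ_iff_lt_or_eq.1 hj with hlt | rfl
      · have hm := hmem c hc j (by omega)
        have := hxz k hk j hlt
        have := (hmem c hc k hk).1
        have := hm.2
        linarith
      · linarith
    · intro j hj1 hj2
      have hm := (hmem c hc j hj2).1
      have := hxz j hj2 k (by omega)
      linarith
  have sgnf_low : ∀ c : ℝ, 0 < c → ∀ k, k < n → ∀ t, ζ k < t → t < η c k →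
      0 < (-1:ℝ)^(n-k) * (h + C c * g).eval t := by
    intro c hc k hk t h1 h2
    rw [hevalf c hc t]
    have hab : (0:ℝ) < a + c * b := by nlinarith
    refine aux_prod_sign2 (le_of_lt hk) hab _ ?_ ?_
    · intro j hj
      have hm := (hmem c hc j (by omega)).2
      have := hxz k hk j hj
      linarith
    · intro j hj1 hj2
      rcases eq_or_lt_of_le hj1 with rfl | hlt
      · linarith
      · have hm := (hmem c hc j hj2).1
        have := hxz j hj2 k hlt
        have := (hmem c hc k hk).2
        linarith
  -- strict antitonicity
  have hanti : ∀ k, k < n → StrictAntiOn (fun c => η c k) (Set.Ioi (0:ℝ)) := by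
    intro k hk c1 hc1 c2 hc2 h12
    have hc1' : 0 < c1 := hc1
    have hc2' : 0 < c2 := hc2
    simp only
    by_contra hcon
    push_neg at hcon
    set t := η c2 k with htdef
    have ht := hmem c2 hc2' k hk
    have hgval := sgng k hk t ht.1 (le_of_lt ht.2)
    have hf2 : (h + C c2 * g).eval t = 0 := hroot c2 hc2' k hk
    have hf1 : (h + C c1 * g).eval t = (c1 - c2) * g.eval t := by
      simp only [eval_add, eval_mul, eval_C] at hf2 ⊢
      linarith
    rcases eq_or_lt_of_le hcon with heq | hlt
    · have hr1 := hroot c1 hc1' k hk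
      rw [heq] at hr1
      rw [hr1] at hf1
      have hgne : g.eval t ≠ 0 := fun h0 => by rw [h0] at hgval; simp at hgval
      rcases mul_eq_zero.1 hf1.symm with h' | h'
      · have := sub_eq_zero.1 h'
        linarith
      · exact hgne h'
    · have hhigh := sgnf_high c1 hc1' k hk t hlt (le_of_lt ht.2)
      rw [hf1] at hhigh
      nlinarith
  -- convergence of roots
  have htend : ∀ k, k < n → Tendsto (fun c => η c k) atTop (𝓝 (ζ k)) := by
    intro k hk
    rw [Metric.tendsto_atTop]
    intro ε hε
    have hzxk := hint1 k hk
    set t := min (ζ k + ε/2) ((ζ k + x k)/2) with htdef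
    have ht1 : ζ k < t := lt_min (by linarith) (by linarith)
    have ht2 : t < x k := lt_of_le_of_lt (min_le_right _ _) (by linarith)
    have ht3 : t < ζ k + ε := lt_of_le_of_lt (min_le_left _ _) (by linarith)
    have hgt := sgng k hk t ht1 (le_of_lt ht2)
    refine ⟨max 1 ((-((-1:ℝ)^(n-(k+1)) * h.eval t)) / ((-1:ℝ)^(n-(k+1)) * g.eval t) + 1),
      fun c hc => ?_⟩
    have hc1 : (1:ℝ) ≤ c := le_trans (le_max_left _ _) hc
    have hc0 : 0 < c := by linarith
    have hft : 0 < (-1:ℝ)^(n-(k+1)) * (h + C c * g).eval t := by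
      have he : (h + C c * g).eval t = h.eval t + c * g.eval t := by simp
      have hdivle : (-((-1:ℝ)^(n-(k+1)) * h.eval t)) / ((-1:ℝ)^(n-(k+1)) * g.eval t) + 1 ≤ c :=
        le_trans (le_max_right _ _) hc
      have hdiv := (div_le_iff₀ hgt).1 (by linarith :
        (-((-1:ℝ)^(n-(k+1)) * h.eval t)) / ((-1:ℝ)^(n-(k+1)) * g.eval t) ≤ c - 1)
      rw [he]
      nlinarith
    have hmemc := hmem c hc0 k hk
    have hlt : η c k < t := by
      by_contra hcon
      push_neg at hcon
      rcases eq_or_lt_of_le hcon with heq | hlt'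
      · have hr := hroot c hc0 k hk
        rw [heq] at hft
        rw [hr] at hft
        simp at hft
      · have hlow := sgnf_low c hc0 k hk t ht1 hlt'
        rw [hS k hk] at hlow
        nlinarith
    have habs : |η c k - ζ k| < ε := abs_lt.2 ⟨by linarith [hmemc.1], by linarith⟩
    simpa [Real.dist_eq] using habs
  -- the scaled limit
  have hlim2 : ∀ k, k < n → Tendsto (fun c => c * (η c k - ζ k)) atTop
      (𝓝 (-(h.eval (ζ k)) / (derivative g).eval (ζ k))) := by
    intro k hk
    set q : Polynomial ℝ := C b * ∏ j ∈ (Finset.range n).erase k, (X - C (ζ j)) with hq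
    have hgq : g = (X - C (ζ k)) * q := by
      rw [hg, hq, ← Finset.mul_prod_erase (Finset.range n) _ (Finset.mem_range.2 hk)]
      ring
    have hder : (derivative g).eval (ζ k) = q.eval (ζ k) := by
      rw [hgq]
      simp [derivative_mul]
    have hqval : ∀ t : ℝ, g.eval t = (t - ζ k) * q.eval t := by
      intro t; rw [hgq]; simp
    have hfac : ∀ j ∈ (Finset.range n).erase k, ∀ t : ℝ, ζ k < t → t < x k → t - ζ j ≠ 0 := by
      intro j hj t htl htr
      obtain ⟨hjk, hjr⟩ := Finset.mem_erase.1 hj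
      have hjn := Finset.mem_range.1 hjr
      rcases lt_or_gt_of_ne hjk with hlt | hlt
      · have h1 := hint1 j hjn
        have h2 := hxz k hk j hlt
        intro h0; nlinarith [sub_eq_zero.1 h0]
      · have h2 := hxz j hjn k hlt
        intro h0; nlinarith [sub_eq_zero.1 h0]
    have hqt : ∀ t : ℝ, ζ k < t → t < x k → q.eval t ≠ 0 := by
      intro t htl htr
      rw [hq]
      simp only [eval_mul, eval_C, eval_prod, eval_sub, eval_X]
      refine mul_ne_zero (ne_of_gt hb) ?_
      rw [Finset.prod_ne_zero_iff]
      intro j hj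
      exact hfac j hj t htl htr
    have hqζ : q.eval (ζ k) ≠ 0 := by
      rw [hq]
      simp only [eval_mul, eval_C, eval_prod, eval_sub, eval_X]
      refine mul_ne_zero (ne_of_gt hb) ?_
      rw [Finset.prod_ne_zero_iff]
      intro j hj
      obtain ⟨hjk, hjr⟩ := Finset.mem_erase.1 hj
      have hjn := Finset.mem_range.1 hjr
      rcases lt_or_gt_of_ne hjk with hlt | hlt
      · have h1 := hint1 j hjn
        have h2 := hxz k hk j hlt
        intro h0; nlinarith [sub_eq_zero.1 h0]
      · have h1 := hint1 k hk
        have h2 := hxz j hjn k hlt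
        intro h0; nlinarith [sub_eq_zero.1 h0]
    have hform : ∀ c : ℝ, 0 < c →
        c * (η c k - ζ k) = -(h.eval (η c k)) / q.eval (η c k) := by
      intro c hc
      have hr := hroot c hc k hk
      have hm := hmem c hc k hk
      have hq0 := hqt (η c k) hm.1 hm.2
      simp only [eval_add, eval_mul, eval_C] at hr
      rw [hqval (η c k)] at hr
      rw [eq_div_iff hq0]
      linear_combination hr
    rw [hder]
    have hcont : Tendsto (fun t : ℝ => -(h.eval t) / q.eval t) (𝓝 (ζ k))
        (𝓝 (-(h.eval (ζ k)) / q.eval (ζ k))) :=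
      Tendsto.div (h.continuous.neg.tendsto (ζ k)) (q.continuous.tendsto (ζ k)) hqζ
    refine (hcont.comp (htend k hk)).congr' ?_
    filter_upwards [eventually_gt_atTop 0] with c hc
    exact (hform c hc).symm
  refine ⟨η, fun c hc => ⟨hfact c hc, fun k hk => ⟨(hmem c hc k hk).1, (hmem c hc k hk).2⟩,
    fun k hk1 => hηlt c hc k (k+1) (Nat.lt_succ_self k) hk1⟩, hanti, htend, hlim2⟩
end

section
/- Let h_n(x) = a(x−x_1)⋯(x−x_n) and g_n(x) = b(x−ζ_1)⋯(x−ζ_n) be real polynomials with real and simple zeros, where a, b > 0, and suppose the zeros interlace as x_1 < ζ_1 < x_2 < ζ_2 < ⋯ < x_n < ζ_n. Then for every real constant c > 0 the polynomial f(x) = h_n(x) + c·g_n(x) has n real simple zeros η_1 < ⋯ < η_n satisfying x_1 < η_1 < ζ_1 < x_2 < η_2 < ζ_2 < ⋯ < x_n < η_n < ζ_n. Moreover each η_k = η_k(c) is a strictly increasing function of c, and for each k = 1,…,n one has lim_{c→∞} η_k(c) = ζ_k and lim_{c→∞} c·[ζ_k − η_k(c)] = h_n(ζ_k)/g_n′(ζ_k).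 -/
open Polynomial Filter Topology

namespace Stmt1Aux

def Itl (n : ℕ) (x ζ : ℕ → ℝ) : Prop :=
  (∀ k < n, x k < ζ k) ∧ (∀ k, k + 1 < n → ζ k < x (k + 1))

lemma mono_both {n : ℕ} {x ζ : ℕ → ℝ} (H : Itl n x ζ) :
    ∀ i j, i ≤ j → j < n → x i ≤ x j ∧ ζ i ≤ ζ j := by
  intro i j hij
  induction j, hij using Nat.le_induction with
  | base => intro _; exact ⟨le_rfl, le_rfl⟩
  | succ j hij ih =>
    intro hj
    have hjn : j < n := by omega
    obtain ⟨h1, h2⟩ := ih hjn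
    have e1 : x j < x (j + 1) := (H.1 j hjn).trans (H.2 j hj)
    have e2 : ζ j < ζ (j + 1) := (H.2 j hj).trans (H.1 (j+1) hj)
    exact ⟨h1.trans e1.le, h2.trans e2.le⟩

lemma zlx {n : ℕ} {x ζ : ℕ → ℝ} (H : Itl n x ζ) {i j : ℕ} (hij : i < j) (hj : j < n) :
    ζ i < x j :=
  (H.2 i (by omega)).trans_le (mono_both H (i+1) j (by omega) hj).1

lemma zeta_mono {n : ℕ} {x ζ : ℕ → ℝ} (H : Itl n x ζ) :
    ∀ i j, i < j → j < n → ζ i < ζ j := fun i j hij hj =>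
  lt_trans (zlx H hij hj) (H.1 j hj)

lemma prod_sign {n : ℕ} (y : ℕ → ℝ) (t : ℝ) (m : ℕ)
    (hlt : ∀ j < m, y j < t) (hgt : ∀ j, m ≤ j → j < n → t < y j) :
    0 < (-1 : ℝ) ^ (n - m) * ∏ j ∈ Finset.range n, (t - y j) := by
  have key : (-1 : ℝ) ^ (n - m) * ∏ j ∈ Finset.range n, (t - y j)
      = ∏ j ∈ Finset.range n, (if j < m then t - y j else y j - t) := by
    have h1 : ((Finset.range n).filter (fun j => ¬ j < m)).card = n - m := by
      have : (Finset.range n).filter (fun j => ¬ j < m) = Finset.Ico m n := by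
        ext j; simp [Finset.mem_filter, Finset.mem_Ico]; omega
      rw [this, Nat.card_Ico]
    calc (-1 : ℝ) ^ (n - m) * ∏ j ∈ Finset.range n, (t - y j)
        = (∏ j ∈ Finset.range n, (if j < m then (1:ℝ) else -1)) *
          ∏ j ∈ Finset.range n, (t - y j) := by
          rw [Finset.prod_ite, Finset.prod_const, Finset.prod_const, one_pow, one_mul, h1]
      _ = ∏ j ∈ Finset.range n, ((if j < m then (1:ℝ) else -1) * (t - y j)) := by
          rw [Finset.prod_mul_distrib]
      _ = _ := by
          apply Finset.prod_congr rfl; intro j _; split_ifs <;> ring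
  rw [key]
  apply Finset.prod_pos
  intro j hj
  rw [Finset.mem_range] at hj
  split_ifs with hjm
  · linarith [hlt j hjm]
  · linarith [hgt j (by omega) hj]

/-- Sign of `g` on `[x k, ζ k)`. -/
lemma sign_g {n : ℕ} {x ζ : ℕ → ℝ} (H : Itl n x ζ) {b : ℝ} (hb : 0 < b)
    {k : ℕ} (hk : k < n) {t : ℝ} (h1 : x k ≤ t) (h2 : t < ζ k) :
    0 < (-1 : ℝ) ^ (n - k) * (C b * ∏ j ∈ Finset.range n, (X - C (ζ j))).eval t := by
  have hp := prod_sign (n := n) ζ t k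
    (fun j hj => lt_of_lt_of_le (zlx H hj hk) h1)
    (fun j hj hjn => lt_of_lt_of_le h2 (mono_both H k j hj hjn).2)
  have : (C b * ∏ j ∈ Finset.range n, (X - C (ζ j))).eval t
      = b * ∏ j ∈ Finset.range n, (t - ζ j) := by
    simp [eval_prod]
  rw [this]
  calc (0:ℝ) < b * ((-1 : ℝ) ^ (n - k) * ∏ j ∈ Finset.range n, (t - ζ j)) :=
        mul_pos hb hp
    _ = (-1 : ℝ) ^ (n - k) * (b * ∏ j ∈ Finset.range n, (t - ζ j)) := by ring

/-- Sign of `h` on `(x k, ζ k]`. -/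
lemma sign_h {n : ℕ} {x ζ : ℕ → ℝ} (H : Itl n x ζ) {a : ℝ} (ha : 0 < a)
    {k : ℕ} (hk : k < n) {t : ℝ} (h1 : x k < t) (h2 : t ≤ ζ k) :
    0 < (-1 : ℝ) ^ (n - (k+1)) * (C a * ∏ j ∈ Finset.range n, (X - C (x j))).eval t := by
  have hp := prod_sign (n := n) x t (k+1)
    (fun j hj => lt_of_le_of_lt (mono_both H j k (by omega) hk).1 h1)
    (fun j hj hjn => lt_of_le_of_lt h2 (zlx H (by omega) hjn))
  have : (C a * ∏ j ∈ Finset.range n, (X - C (x j))).eval t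
      = a * ∏ j ∈ Finset.range n, (t - x j) := by
    simp [eval_prod]
  rw [this]
  calc (0:ℝ) < a * ((-1 : ℝ) ^ (n - (k+1)) * ∏ j ∈ Finset.range n, (t - x j)) :=
        mul_pos ha hp
    _ = _ := by ring

lemma exists_root {n : ℕ} {x ζ : ℕ → ℝ} (H : Itl n x ζ) {a b c : ℝ} (ha : 0 < a)
    {k : ℕ} (hk : k < n) {t : ℝ} (ht2 : t < ζ k)
    (hpos : 0 < (-1 : ℝ) ^ (n - k) *
      (C a * ∏ j ∈ Finset.range n, (X - C (x j)) +
        C c * (C b * ∏ j ∈ Finset.range n, (X - C (ζ j)))).eval t) :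
    ∃ y, t < y ∧ y < ζ k ∧
      (C a * ∏ j ∈ Finset.range n, (X - C (x j)) +
        C c * (C b * ∏ j ∈ Finset.range n, (X - C (ζ j)))).eval y = 0 := by
  set f : Polynomial ℝ := C a * ∏ j ∈ Finset.range n, (X - C (x j)) +
        C c * (C b * ∏ j ∈ Finset.range n, (X - C (ζ j))) with hf
  set s : ℝ := (-1) ^ (n - k) with hs
  have hsne : s ≠ 0 := by positivity
  set F : ℝ → ℝ := fun u => s * f.eval u with hF
  have hcont : ContinuousOn F (Set.Icc t (ζ k)) :=
    (continuous_const.mul f.continuous).continuousOn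
  have hgz : (∏ j ∈ Finset.range n, (X - C (ζ j))).eval (ζ k) = 0 := by
    rw [eval_prod]
    exact Finset.prod_eq_zero (Finset.mem_range.2 hk) (by simp)
  have hFz : F (ζ k) < 0 := by
    have h1 := sign_h H ha hk (H.1 k hk) (le_refl (ζ k))
    have hsk : s = -(-1 : ℝ) ^ (n - (k+1)) := by
      rw [hs]
      have : n - k = (n - (k+1)) + 1 := by omega
      rw [this, pow_succ]; ring
    have : F (ζ k) = s * ((C a * ∏ j ∈ Finset.range n, (X - C (x j))).eval (ζ k)) := by
      simp only [hF, hf, eval_add, eval_mul, hgz]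
      ring
    rw [this, hsk]
    nlinarith
  have hFt : 0 < F t := hpos
  have h0 : (0:ℝ) ∈ Set.Ioo (F (ζ k)) (F t) := ⟨hFz, hFt⟩
  obtain ⟨y, hy, hFy⟩ := intermediate_value_Ioo' (le_of_lt ht2) hcont h0
  refine ⟨y, hy.1, hy.2, ?_⟩
  have := hFy
  rw [hF] at this
  rcases mul_eq_zero.1 this with h | h
  · exact absurd h hsne
  · exact h

lemma prod_monic (n : ℕ) (r : ℕ → ℝ) :
    (∏ j ∈ Finset.range n, (X - C (r j))).Monic :=
  monic_prod_of_monic _ _ (fun _ _ => monic_X_sub_C _)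

lemma prod_natDegree (n : ℕ) (r : ℕ → ℝ) :
    (∏ j ∈ Finset.range n, (X - C (r j))).natDegree = n := by
  rw [natDegree_prod_of_monic _ _ (fun i _ => monic_X_sub_C _)]
  simp

lemma lin_comb_monic {n : ℕ} {P Q : Polynomial ℝ} (hP : P.Monic) (hQ : Q.Monic)
    (hPd : P.natDegree = n) (hQd : Q.natDegree = n) {u v : ℝ} (huv : u + v ≠ 0) :
    (C u * P + C v * Q).natDegree = n ∧ (C u * P + C v * Q).leadingCoeff = u + v := by
  have hP1 : P.coeff n = 1 := by rw [← hPd]; exact hP.coeff_natDegree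
  have hQ1 : Q.coeff n = 1 := by rw [← hQd]; exact hQ.coeff_natDegree
  have hcoeff : (C u * P + C v * Q).coeff n = u + v := by
    rw [coeff_add, coeff_C_mul, coeff_C_mul, hP1, hQ1]; ring
  have hle : (C u * P + C v * Q).natDegree ≤ n :=
    le_trans (natDegree_add_le _ _)
      (max_le (le_trans (natDegree_C_mul_le _ _) hPd.le)
        (le_trans (natDegree_C_mul_le _ _) hQd.le))
  have hge : n ≤ (C u * P + C v * Q).natDegree :=
    le_natDegree_of_ne_zero (hcoeff ▸ huv)
  have hdeg : (C u * P + C v * Q).natDegree = n := le_antisymm hle hge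
  exact ⟨hdeg, by rw [leadingCoeff, hdeg, hcoeff]⟩

lemma factor {n : ℕ} {x ζ : ℕ → ℝ} (H : Itl n x ζ) {a b c : ℝ}
    (habc : 0 < a + c * b) (η : ℕ → ℝ)
    (hη : ∀ k < n, x k < η k ∧ η k < ζ k)
    (hroot : ∀ k < n, (C a * ∏ j ∈ Finset.range n, (X - C (x j)) +
        C c * (C b * ∏ j ∈ Finset.range n, (X - C (ζ j)))).eval (η k) = 0) :
    C a * ∏ j ∈ Finset.range n, (X - C (x j)) +
      C c * (C b * ∏ j ∈ Finset.range n, (X - C (ζ j)))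
      = C (a + c * b) * ∏ k ∈ Finset.range n, (X - C (η k)) := by
  have hstrict : ∀ i j, i < j → j < n → η i < η j := by
    intro i j hij hj
    have h1 : η i < ζ i := (hη i (by omega)).2
    have h2 : x j < η j := (hη j hj).1
    linarith [zlx H hij hj]
  set f : Polynomial ℝ := C a * ∏ j ∈ Finset.range n, (X - C (x j)) +
      C c * (C b * ∏ j ∈ Finset.range n, (X - C (ζ j))) with hf
  set q : Polynomial ℝ := C (a + c * b) * ∏ k ∈ Finset.range n, (X - C (η k)) with hq
  have hf' : f = C a * (∏ j ∈ Finset.range n, (X - C (x j))) +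
      C (c * b) * (∏ j ∈ Finset.range n, (X - C (ζ j))) := by
    rw [hf, ← mul_assoc, ← C_mul]
  have huv : a + c * b ≠ 0 := ne_of_gt habc
  have hfd := lin_comb_monic (prod_monic n x) (prod_monic n ζ)
    (prod_natDegree n x) (prod_natDegree n ζ) huv
  rw [← hf'] at hfd
  have hqd : q.natDegree = n := by
    rw [hq, natDegree_C_mul huv, prod_natDegree]
  have hql : q.leadingCoeff = a + c * b := by
    rw [hq, leadingCoeff_mul, leadingCoeff_C, (prod_monic n η).leadingCoeff, mul_one]
  have hqne : q ≠ 0 := by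
    intro h0
    rw [h0, leadingCoeff_zero] at hql
    exact huv hql.symm
  have hfne : f ≠ 0 := by
    intro h0
    rw [h0, leadingCoeff_zero] at hfd
    exact huv hfd.2.symm
  have hdegeq : f.degree = q.degree := by
    rw [degree_eq_natDegree hfne, degree_eq_natDegree hqne, hfd.1, hqd]
  have hsub : f - q = 0 := by
    by_cases hfq : f - q = 0
    · exact hfq
    · have hdlt : (f - q).degree < f.degree :=
        degree_sub_lt hdegeq hfne (by rw [hfd.2, hql])
      have hnd : (f - q).natDegree < n := by
        rw [natDegree_lt_iff_degree_lt hfq]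
        rw [degree_eq_natDegree hfne, hfd.1] at hdlt
        exact hdlt
      apply eq_zero_of_natDegree_lt_card_of_eval_eq_zero (f - q)
        (f := fun i : Fin n => η i)
      · intro i j hij
        by_contra hne
        rcases Ne.lt_or_gt (fun h : i = j => hne h) with hlt | hlt
        · exact absurd hij (ne_of_lt (hstrict i j hlt j.2))
        · exact absurd hij.symm (ne_of_lt (hstrict j i hlt i.2))
      · intro i
        rw [eval_sub, hroot i i.2, hq]
        simp only [eval_mul, eval_prod, eval_sub, eval_X, eval_C]
        rw [Finset.prod_eq_zero (Finset.mem_range.2 i.2) (by simp)]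
        ring
      · simpa using hnd
  exact sub_eq_zero.mp hsub

lemma gder {n : ℕ} {ζ : ℕ → ℝ} {b : ℝ} (hb : 0 < b)
    (hmono : ∀ i j, i < j → j < n → ζ i < ζ j) {k : ℕ} (hk : k < n) :
    (derivative (C b * ∏ j ∈ Finset.range n, (X - C (ζ j)))).eval (ζ k) ≠ 0 := by
  set R : Polynomial ℝ := ∏ j ∈ (Finset.range n).erase k, (X - C (ζ j)) with hR
  have hsplit : (∏ j ∈ Finset.range n, (X - C (ζ j))) = (X - C (ζ k)) * R :=
    (Finset.mul_prod_erase _ _ (Finset.mem_range.2 hk)).symm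
  have heval : (derivative (C b * ∏ j ∈ Finset.range n, (X - C (ζ j)))).eval (ζ k)
      = b * R.eval (ζ k) := by
    rw [hsplit, derivative_C_mul, derivative_mul, derivative_X_sub_C]
    simp [eval_mul]
  rw [heval]
  refine mul_ne_zero (ne_of_gt hb) ?_
  rw [hR, eval_prod]
  rw [Finset.prod_ne_zero_iff]
  intro j hj
  simp only [Finset.mem_erase, Finset.mem_range] at hj
  simp only [eval_sub, eval_X, eval_C]
  rcases lt_or_gt_of_ne hj.1 with hlt | hlt
  · exact sub_ne_zero.2 (ne_of_gt (hmono j k hlt hk))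
  · exact sub_ne_zero.2 (ne_of_lt (hmono k j hlt hj.2))

end Stmt1Aux

open Stmt1Aux in
/-- Zeros of `f = h + c·g` when the zeros interlace as
`x₁ < ζ₁ < x₂ < ζ₂ < ⋯ < xₙ < ζₙ`.  For every `c > 0` the polynomial `f` factors with
`n` real simple zeros `η_k(c)` satisfying `x_k < η_k(c) < ζ_k`; each `η_k` is strictly
increasing in `c`, `η_k(c) → ζ_k` as `c → ∞`, and `c·(ζ_k − η_k(c)) → h(ζ_k)/g'(ζ_k)`. -/
theorem stmt_1 (n : ℕ) (hn : 0 < n) (a b : ℝ) (ha : 0 < a) (hb : 0 < b)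
    (x ζ : ℕ → ℝ) (h g : Polynomial ℝ)
    (hh : h = C a * ∏ k ∈ Finset.range n, (X - C (x k)))
    (hg : g = C b * ∏ k ∈ Finset.range n, (X - C (ζ k)))
    (hint1 : ∀ k < n, x k < ζ k)
    (hint2 : ∀ k, k + 1 < n → ζ k < x (k + 1)) :
    ∃ η : ℝ → ℕ → ℝ,
      (∀ c : ℝ, 0 < c →
        (h + C c * g = C (a + c * b) * ∏ k ∈ Finset.range n, (X - C (η c k))) ∧
        (∀ k < n, x k < η c k ∧ η c k < ζ k) ∧
        (∀ k, k + 1 < n → η c k < η c (k + 1))) ∧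
      (∀ k < n, StrictMonoOn (fun c => η c k) (Set.Ioi (0 : ℝ))) ∧
      (∀ k < n, Tendsto (fun c => η c k) atTop (𝓝 (ζ k))) ∧
      (∀ k < n, Tendsto (fun c => c * (ζ k - η c k)) atTop
        (𝓝 (h.eval (ζ k) / (derivative g).eval (ζ k)))) := by
  classical
  have H : Itl n x ζ := ⟨hint1, hint2⟩
  -- evaluation of f c
  have hfe : ∀ c t : ℝ, (h + C c * g).eval t = h.eval t + c * g.eval t := by
    intro c t; simp [eval_add, eval_mul]
  have hhz : ∀ k < n, h.eval (x k) = 0 := by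
    intro k hk
    rw [hh, eval_mul, eval_prod]
    rw [Finset.prod_eq_zero (Finset.mem_range.2 hk) (by simp)]
    ring
  have hgz : ∀ k < n, g.eval (ζ k) = 0 := by
    intro k hk
    rw [hg, eval_mul, eval_prod]
    rw [Finset.prod_eq_zero (Finset.mem_range.2 hk) (by simp)]
    ring
  -- existence of a root in each interval, above any point t where s·f > 0
  have hroot_above : ∀ c : ℝ, ∀ k < n, ∀ t : ℝ, t < ζ k →
      0 < (-1 : ℝ) ^ (n - k) * (h + C c * g).eval t →
      ∃ y, t < y ∧ y < ζ k ∧ (h + C c * g).eval y = 0 := by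
    intro c k hk t ht hpos
    rw [hh, hg] at hpos ⊢
    exact exists_root H ha hk ht hpos
  have hex : ∀ c k, ∃ y, 0 < c → k < n →
      x k < y ∧ y < ζ k ∧ (h + C c * g).eval y = 0 := by
    intro c k
    by_cases hck : 0 < c ∧ k < n
    · obtain ⟨hc, hk⟩ := hck
      have hgs := sign_g H hb hk (le_refl (x k)) (H.1 k hk)
      rw [← hg] at hgs
      have hpos : 0 < (-1 : ℝ) ^ (n - k) * (h + C c * g).eval (x k) := by
        rw [hfe, hhz k hk]
        calc (0:ℝ) < c * ((-1 : ℝ) ^ (n - k) * g.eval (x k)) := mul_pos hc hgs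
          _ = (-1 : ℝ) ^ (n - k) * (0 + c * g.eval (x k)) := by ring
      obtain ⟨y, hy1, hy2, hy3⟩ := hroot_above c k hk (x k) (H.1 k hk) hpos
      exact ⟨y, fun _ _ => ⟨hy1, hy2, hy3⟩⟩
    · exact ⟨0, fun hc hk => absurd ⟨hc, hk⟩ hck⟩
  choose η hη using hex
  have habc : ∀ c : ℝ, 0 < c → 0 < a + c * b := by
    intro c hc; nlinarith
  -- factorization
  have hfact : ∀ c : ℝ, 0 < c →
      h + C c * g = C (a + c * b) * ∏ k ∈ Finset.range n, (X - C (η c k)) := by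
    intro c hc
    rw [hh, hg]
    apply factor H (habc c hc)
    · intro k hk
      exact ⟨(hη c k hc hk).1, (hη c k hc hk).2.1⟩
    · intro k hk
      rw [← hh, ← hg]
      exact (hη c k hc hk).2.2
  -- uniqueness of the root in each interval
  have huniq : ∀ c : ℝ, 0 < c → ∀ k < n, ∀ y : ℝ, x k < y → y < ζ k →
      (h + C c * g).eval y = 0 → y = η c k := by
    intro c hc k hk y hy1 hy2 hy0
    rw [hfact c hc] at hy0
    simp only [eval_mul, eval_prod, eval_sub, eval_X, eval_C] at hy0
    rcases mul_eq_zero.1 hy0 with h0 | h0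
    · exact absurd h0 (ne_of_gt (habc c hc))
    · obtain ⟨j, hj, hj0⟩ := Finset.prod_eq_zero_iff.1 h0
      rw [Finset.mem_range] at hj
      have hyj : y = η c j := by linarith [sub_eq_zero.1 hj0]
      rcases lt_trichotomy j k with hlt | heq | hlt
      · exfalso
        have h1 : η c j < ζ j := (hη c j hc hj).2.1
        have h2 : ζ j < x k := zlx H hlt hk
        linarith
      · rw [hyj, heq]
      · exfalso
        have h1 : x j < η c j := (hη c j hc hj).1
        have h2 : ζ k < x j := zlx H hlt hj
        linarith
  -- monotonicity helper: for 0 < c < c', η c k < η c' k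
  have hmono : ∀ k < n, ∀ c c' : ℝ, 0 < c → c < c' → η c k < η c' k := by
    intro k hk c c' hc hcc'
    have hc' : 0 < c' := hc.trans hcc'
    have ht := hη c k hc hk
    set t := η c k with htdef
    have hft' : (h + C c' * g).eval t = (c' - c) * g.eval t := by
      have h1 := hfe c t
      have h2 := hfe c' t
      have h3 := ht.2.2
      rw [h1] at h3
      rw [h2]; linarith
    have hgs := sign_g H hb hk (le_of_lt ht.1) ht.2.1
    rw [← hg] at hgs
    have hpos : 0 < (-1 : ℝ) ^ (n - k) * (h + C c' * g).eval t := by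
      rw [hft']
      calc (0:ℝ) < (c' - c) * ((-1 : ℝ) ^ (n - k) * g.eval t) :=
            mul_pos (by linarith) hgs
        _ = (-1 : ℝ) ^ (n - k) * ((c' - c) * g.eval t) := by ring
    obtain ⟨y, hy1, hy2, hy3⟩ := hroot_above c' k hk t ht.2.1 hpos
    have : y = η c' k := huniq c' hc' k hk y (ht.1.trans hy1) hy2 hy3
    rw [← this]; exact hy1
  -- the limit η c k → ζ k
  have hgoal3 : ∀ k < n, Tendsto (fun c => η c k) atTop (𝓝 (ζ k)) := by
    intro k hk
    rw [Metric.tendsto_atTop]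
    intro ε hε
    have hxz := H.1 k hk
    set t : ℝ := max (ζ k - ε) ((x k + ζ k) / 2) with htdef
    have ht1 : x k < t := lt_of_lt_of_le (by linarith) (le_max_right _ _)
    have ht2 : t < ζ k := max_lt (by linarith) (by linarith)
    have hgs := sign_g H hb hk (le_of_lt ht1) ht2
    rw [← hg] at hgs
    set sg : ℝ := (-1 : ℝ) ^ (n - k) * g.eval t with hsgdef
    set sh : ℝ := (-1 : ℝ) ^ (n - k) * h.eval t with hshdef
    refine ⟨max 1 ((1 - sh) / sg), ?_⟩
    intro c hc
    have hc1 : (1 : ℝ) ≤ c := le_trans (le_max_left _ _) hc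
    have hc0 : 0 < c := lt_of_lt_of_le one_pos hc1
    have hcb : (1 - sh) / sg ≤ c := le_trans (le_max_right _ _) hc
    have hcsg : 1 - sh ≤ c * sg := by
      rw [div_le_iff₀ hgs] at hcb; linarith
    have hpos : 0 < (-1 : ℝ) ^ (n - k) * (h + C c * g).eval t := by
      rw [hfe]
      have : (-1 : ℝ) ^ (n - k) * (h.eval t + c * g.eval t) = sh + c * sg := by
        rw [hshdef, hsgdef]; ring
      rw [this]; linarith
    obtain ⟨y, hy1, hy2, hy3⟩ := hroot_above c k hk t ht2 hpos
    have hyη : y = η c k := huniq c hc0 k hk y (ht1.trans hy1) hy2 hy3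
    have hεt : ζ k - ε ≤ t := le_max_left _ _
    rw [Real.dist_eq, abs_lt]
    constructor
    · rw [← hyη]; linarith
    · have := (hη c k hc0 hk).2.1
      linarith
  refine ⟨η, ?_, ?_, hgoal3, ?_⟩
  · intro c hc
    refine ⟨hfact c hc, fun k hk => ⟨(hη c k hc hk).1, (hη c k hc hk).2.1⟩, ?_⟩
    intro k hk1
    have h1 : η c k < ζ k := (hη c k hc (by omega)).2.1
    have h2 : ζ k < x (k+1) := hint2 k hk1
    have h3 : x (k+1) < η c (k+1) := (hη c (k+1) hc hk1).1
    linarith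
  · intro k hk c hc c' hc' hcc'
    exact hmono k hk c c' hc hcc'
  · intro k hk
    have hζmono := zeta_mono H
    have hg' : (derivative g).eval (ζ k) ≠ 0 := by
      rw [hg]; exact gder hb hζmono hk
    have hder : HasDerivAt (fun u => g.eval u) ((derivative g).eval (ζ k)) (ζ k) :=
      g.hasDerivAt (ζ k)
    have hslope := hasDerivAt_iff_tendsto_slope.mp hder
    have hne : Tendsto (fun c => η c k) atTop (𝓝[≠] (ζ k)) := by
      rw [tendsto_nhdsWithin_iff]
      refine ⟨hgoal3 k hk, ?_⟩
      filter_upwards [eventually_gt_atTop (0:ℝ)] with c hc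
      exact ne_of_lt (hη c k hc hk).2.1
    have hL : Tendsto (fun c => h.eval (η c k) / slope (fun u => g.eval u) (ζ k) (η c k))
        atTop (𝓝 (h.eval (ζ k) / (derivative g).eval (ζ k))) := by
      apply Tendsto.div
      · exact (h.continuous.tendsto (ζ k)).comp (hgoal3 k hk)
      · exact hslope.comp hne
      · exact hg'
    apply Tendsto.congr' _ hL
    filter_upwards [eventually_gt_atTop (0:ℝ)] with c hc
    obtain ⟨he1, he2, he3⟩ := hη c k hc hk
    have hrooteq : h.eval (η c k) + c * g.eval (η c k) = 0 := by
      rw [← hfe]; exact he3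
    have hgη : g.eval (η c k) ≠ 0 := by
      intro h0
      have hgs := sign_g H hb hk (le_of_lt he1) he2
      rw [← hg, h0, mul_zero] at hgs
      exact lt_irrefl _ hgs
    have hηζ : η c k - ζ k ≠ 0 := sub_ne_zero.2 (ne_of_lt he2)
    rw [slope_def_field, hgz k hk, sub_zero, div_div_eq_mul_div, div_eq_iff hgη]
    ring_nf
    linear_combination (η c k - ζ k) * hrooteq
end

section
/- Fix n and suppose: (1) p_n^N(a;x) = p_n*(a;x) + c_n·p_{n−1}*(a;x) for a constant c_n ≠ 0; (2) the polynomials p_k*(a;·) satisfy the three-term recurrence x·p_{n−1}*(a;x) = p_n*(a;x) + β*_{n−1}·p_{n−1}*(a;x) + γ*_{n−1}·p_{n−2}*(a;x) with γ*_{n−1} ≠ 0; (3) the structure relations φ(x)·(p_k*(a;x))′ = A(x,k)·p_k*(a;x) + B(x,k)·p_{k−1}*(a;x) hold for k = n and k = n−1, where φ, A(·,k), B(·,k) are polynomials. Define A*(x,n) = A(x,n) − (c_n/γ*_{n−1})·B(x,n−1) and B*(x,n) = B(x,n) + c_n·A(x,n−1) + (c_n/γ*_{n−1})·(x−β*_{n−1})·B(x,n−1).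 Then, on the set where B*(x,n) − c_n·A*(x,n) ≠ 0, the function y = p_n^N(a;x) satisfies the second-order linear differential equation 𝒜(x;n)·y″ + ℬ(x;n)·y′ + 𝒞(x;n)·y = 0, where 𝒜(x;n) = c_n·φ(x)²/(B*(x,n) − c_n·A*(x,n)), ℬ(x;n) = φ(x)·[B(x,n) − B*(x,n) + c_n·(φ′(x) − A(x,n))]/(B*(x,n) − c_n·A*(x,n)) − c_n·φ(x)²·(B*(x,n) − c_n·A*(x,n))′/(B*(x,n) − c_n·A*(x,n))², and 𝒞(x;n) = [A(x,n)·B*(x,n) − B(x,n)·A*(x,n)]/(B*(x,n) − c_n·A*(x,n)) − φ(x)·d/dx[B*(x,n)/(B*(x,n) − c_n·A*(x,n))]. -/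
set_option maxHeartbeats 1000000

open Polynomial

/-- Second-order linear differential equation satisfied by
`y = p_n^N(a;x)`, given the connection formula `p_n^N = p_n* + c_n·p_{n−1}*`, the
three-term recurrence of the `p_k*`, and the structure relations
`φ·(p_k*)′ = A(·,k)·p_k* + B(·,k)·p_{k−1}*` for `k = n, n−1`.  With
`A* = A(·,n) − (c_n/γ*_{n−1})·B(·,n−1)`,
`B* = B(·,n) + c_n·A(·,n−1) + (c_n/γ*_{n−1})·(x−β*_{n−1})·B(·,n−1)`,
on the set where `B* − c_n·A* ≠ 0` one has `𝒜 y″ + ℬ y′ + 𝒞 y = 0` with the stated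
coefficients. -/
theorem stmt_17 (c βs γs : ℝ) (hc : c ≠ 0) (hγs : γs ≠ 0)
    (φ pN ps psm psm2 An Anm Bn Bnm : Polynomial ℝ)
    (h1 : pN = ps + C c * psm)
    (h2 : X * psm = ps + C βs * psm + C γs * psm2)
    (h3a : φ * derivative ps = An * ps + Bn * psm)
    (h3b : φ * derivative psm = Anm * psm + Bnm * psm2) :
    let Astar : Polynomial ℝ := An - C (c / γs) * Bnm
    let Bstar : Polynomial ℝ := Bn + C c * Anm + C (c / γs) * (X - C βs) * Bnm
    let D : Polynomial ℝ := Bstar - C c * Astar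
    ∀ x : ℝ, D.eval x ≠ 0 →
      (c * (φ.eval x) ^ 2 / D.eval x) * (derivative (derivative pN)).eval x
      + (φ.eval x * (Bn.eval x - Bstar.eval x
            + c * ((derivative φ).eval x - An.eval x)) / D.eval x
          - c * (φ.eval x) ^ 2 * (derivative D).eval x / (D.eval x) ^ 2)
        * (derivative pN).eval x
      + ((An.eval x * Bstar.eval x - Bn.eval x * Astar.eval x) / D.eval x
          - φ.eval x * deriv (fun t => Bstar.eval t / D.eval t) x)
        * pN.eval x = 0 := by
  intro Astar Bstar D x hD
  have hAe : Astar = An - C (c / γs) * Bnm := rfl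
  have hBe : Bstar = Bn + C c * Anm + C (c / γs) * (X - C βs) * Bnm := rfl
  have hDe : D = Bstar - C c * Astar := rfl
  have hqC : C γs * C (c / γs) = (C c : Polynomial ℝ) := by
    rw [← C_mul]; congr 1; field_simp
  have hgC : C γs⁻¹ * C γs = (1 : Polynomial ℝ) := by
    rw [← C_mul, inv_mul_cancel₀ hγs, map_one]
  have hd1 : derivative pN = derivative ps + C c * derivative psm := by
    rw [h1, derivative_add, derivative_C_mul]
  -- first structure relation for pN
  have E1y : φ * derivative pN = Astar * pN + D * psm := by
    rw [hDe, hBe, hAe, hd1, h1]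
    linear_combination h3a + C c * h3b - C (c / γs) * Bnm * h2 - Bnm * psm2 * hqC
  -- second structure relation for psm
  have E2y : φ * derivative psm
      = (Anm + C γs⁻¹ * (X - C βs) * Bnm + C γs⁻¹ * C c * Bnm) * psm
        - C γs⁻¹ * Bnm * pN := by
    linear_combination h3b - C γs⁻¹ * Bnm * h2 + C γs⁻¹ * Bnm * h1 - Bnm * psm2 * hgC
  have dE1y := congrArg derivative E1y
  simp only [derivative_add, derivative_mul] at dE1y
  -- evaluate at x
  have e1a := congrArg (eval x) E1y
  have de1a := congrArg (eval x) dE1y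
  have e2a := congrArg (eval x) E2y
  simp only [eval_add, eval_sub, eval_mul, eval_C, eval_X] at e1a de1a e2a
  -- bridging identities
  have g1 : Bstar.eval x = D.eval x + c * Astar.eval x := by
    rw [hDe]; simp [eval_sub, eval_mul, eval_C]
  have g2 : (derivative Bstar).eval x
      = (derivative D).eval x + c * (derivative Astar).eval x := by
    rw [hDe]; simp [derivative_sub, derivative_C_mul, eval_sub, eval_mul, eval_C]
  have g3 : Astar.eval x = An.eval x - c * (γs⁻¹ * Bnm.eval x) := by
    rw [hAe]; simp [eval_sub, eval_mul, eval_C]; ring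
  have g4 : D.eval x = Bn.eval x
      + c * (Anm.eval x + γs⁻¹ * (x - βs) * Bnm.eval x + c * γs⁻¹ * Bnm.eval x)
      - c * An.eval x := by
    rw [hDe, hBe, hAe]
    simp [eval_sub, eval_add, eval_mul, eval_C, eval_X]; ring
  -- quotient derivative
  have hder : deriv (fun t => Bstar.eval t / D.eval t) x
      = ((derivative Bstar).eval x * D.eval x
          - Bstar.eval x * (derivative D).eval x) / (D.eval x) ^ 2 := by
    have hdd : HasDerivAt (fun t : ℝ => Bstar.eval t / D.eval t)
        (((derivative Bstar).eval x * D.eval x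
          - Bstar.eval x * (derivative D).eval x) / (D.eval x) ^ 2) x :=
      (Polynomial.hasDerivAt Bstar x).div (Polynomial.hasDerivAt D x) hD
    exact hdd.deriv
  rw [hder]
  set f := φ.eval x with hf
  set f1 := (derivative φ).eval x with hf1
  set y := pN.eval x with hy
  set y1 := (derivative pN).eval x with hy1
  set y2 := (derivative (derivative pN)).eval x with hy2
  set v := psm.eval x with hv
  set v1 := (derivative psm).eval x with hv1
  set aa := Astar.eval x with haa
  set aa1 := (derivative Astar).eval x with haa1
  set bb := Bstar.eval x with hbb
  set bb1 := (derivative Bstar).eval x with hbb1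
  set dd := D.eval x with hdd0
  set dd1 := (derivative D).eval x with hdd10
  set an := An.eval x with han
  set bn := Bn.eval x with hbn
  set anm := Anm.eval x with hanm
  set bnm := Bnm.eval x with hbnm
  have key : c*f^2*dd*y2 + (f*(bn - bb + c*(f1 - an))*dd - c*f^2*dd1)*y1
      + ((an*bb - bn*aa)*dd - f*(bb1*dd - bb*dd1))*y = 0 := by
    linear_combination (c*f*dd) * de1a + (c*dd^2) * e2a
      - (c*(f*dd1 + dd*(anm + γs⁻¹*(x - βs)*bnm + c*γs⁻¹*bnm))) * e1a
      + (y*(an*dd + f*dd1) - y1*f*dd) * g1 + (-(f*dd*y)) * g2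
      + (-(dd^2*y)) * g3 + (aa*dd*y - f*dd*y1) * g4
  field_simp
  linear_combination key
end

section
/- Let α > −1, a < 0, and let (p_n*(a;·)) be the MOPS for the measure dμ*(x) = (x−a)·x^α e^{−x} dx on [0,∞). Set a_n = L_{n+1}^α(a)/L_n^α(a). Then the structure relation φ(x)·(p_n*(a;x))′ = A(x,n)·p_n*(a;x) + B(x,n)·p_{n−1}*(a;x) holds, where φ(x) = (x−a)·x, A(x,n) = n·[x − (n+1+a_n)·(1 + (n+α)/a_{n−1})], and B(x,n) = [n(n+α)/a_{n−1}]·[a_n·x − (n+1+a_n)·(n+1+a_n+α)]. -/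
open MeasureTheory Polynomial Set Filter Topology
open scoped ENNReal

namespace S18

variable (α : ℝ)

/-- monic Laguerre polynomials via three-term recurrence -/
noncomputable def ell (α : ℝ) : ℕ → Polynomial ℝ
  | 0 => 1
  | 1 => X - C (1 + α)
  | (n+2) => (X - C (2*(n+1)+1+α)) * ell α (n+1) - C (((n:ℝ)+1)*((n+1)+α)) * ell α n

lemma ell_ttr (n : ℕ) :
    ell α (n+2) = (X - C (2*((n:ℝ)+1)+1+α)) * ell α (n+1) - C (((n:ℝ)+1)*((n+1)+α)) * ell α n := by
  rw [ell]

lemma ell_monic (n : ℕ) : (ell α n).Monic ∧ (ell α n).natDegree = n := by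
  induction n using Nat.strong_induction_on with
  | _ n ih =>
    match n with
    | 0 => exact ⟨monic_one, natDegree_one⟩
    | 1 => refine ⟨monic_X_sub_C _, natDegree_X_sub_C _⟩
    | (n+2) =>
      obtain ⟨h1m, h1d⟩ := ih (n+1) (by omega)
      obtain ⟨h0m, h0d⟩ := ih n (by omega)
      rw [ell_ttr]
      have hm : ((X - C (2*((n:ℝ)+1)+1+α)) * ell α (n+1)).Monic :=
        (monic_X_sub_C _).mul h1m
      have hd : ((X - C (2*((n:ℝ)+1)+1+α)) * ell α (n+1)).natDegree = n + 2 := by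
        rw [(monic_X_sub_C _).natDegree_mul h1m, natDegree_X_sub_C, h1d]; omega
      have hlt : (C (((n:ℝ)+1)*((n+1)+α)) * ell α n).degree
          < ((X - C (2*((n:ℝ)+1)+1+α)) * ell α (n+1)).degree := by
        rw [degree_eq_natDegree hm.ne_zero, hd]
        calc (C (((n:ℝ)+1)*((n+1)+α)) * ell α n).degree
            ≤ (C (((n:ℝ)+1)*((n+1)+α))).degree + (ell α n).degree := degree_mul_le _ _
          _ ≤ 0 + (n : WithBot ℕ) := by
              refine add_le_add degree_C_le ?_
              have := degree_le_natDegree (p := ell α n)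
              rwa [h0d] at this
          _ < (n+2 : ℕ) := by
              rw [zero_add]
              exact_mod_cast WithBot.coe_lt_coe.mpr (by omega)
      refine ⟨hm.sub_of_left hlt, ?_⟩
      apply natDegree_eq_of_degree_eq_some
      rw [degree_sub_eq_left_of_degree_lt hlt, degree_eq_natDegree hm.ne_zero, hd]


lemma ell_deriv : ∀ n : ℕ, X * derivative (ell α (n+1))
    = C ((n:ℝ)+1) * ell α (n+1) + C (((n:ℝ)+1)*(((n:ℝ)+1)+α)) * ell α n := by
  intro n
  induction n using Nat.strong_induction_on with
  | _ n ih =>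
    match n with
    | 0 =>
      show X * derivative (ell α 1) = _
      simp only [ell, derivative_sub, derivative_X, derivative_C, derivative_one,
        Nat.cast_zero, map_add, map_mul, map_one, map_zero, sub_zero]
      ring
    | 1 =>
      show X * derivative (ell α 2) = _
      rw [ell_ttr]
      simp only [ell, derivative_mul, derivative_sub, derivative_X, derivative_C,
        derivative_one, derivative_ofNat, Nat.cast_zero, Nat.cast_one, map_add, map_mul,
        map_one, map_zero, map_ofNat]
      ring
    | (n+2) =>
      have IH2 := ih (n+1) (by omega)
      have IH1 := ih n (by omega)
      have E2 := ell_ttr α (n+1)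
      have E1 := ell_ttr α n
      have D := congrArg derivative E2
      simp only [derivative_sub, derivative_mul, derivative_add, derivative_X,
        derivative_C, derivative_one, derivative_ofNat] at D
      push_cast at IH2 IH1 E2 E1 D ⊢
      simp only [map_add, map_mul, map_one, map_ofNat] at IH2 IH1 E2 E1 D ⊢
      linear_combination X * D + (X - (2*(C (n:ℝ)+2)+1+C α)) * IH2
        - ((C (n:ℝ)+2)*(C (n:ℝ)+2+C α)) * IH1 - (C (n:ℝ)+3) * E2
        - ((C (n:ℝ)+2)*(C (n:ℝ)+2+C α)) * E1

variable {α} {a : ℝ}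

/-- sign/growth of `ell` at a negative point -/
lemma ell_eval_pos (hα : -1 < α) (ha : a < 0) :
    ∀ n : ℕ, 0 < (-1:ℝ)^n * (ell α n).eval a ∧
    ((n:ℝ)+1+α) * ((-1:ℝ)^n * (ell α n).eval a) ≤ (-1:ℝ)^(n+1) * (ell α (n+1)).eval a := by
  intro n
  induction n with
  | zero =>
    constructor
    · simp [ell]
    · simp [ell]; nlinarith
  | succ n ihn =>
    obtain ⟨h0, h1⟩ := ihn
    have hpos : 0 < (-1:ℝ)^(n+1) * (ell α (n+1)).eval a := by nlinarith [h1, h0]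
    refine ⟨hpos, ?_⟩
    have E := congrArg (Polynomial.eval a) (ell_ttr α n)
    simp only [eval_sub, eval_mul, eval_add, eval_X, eval_C] at E
    have key : (-1:ℝ)^(n+2) * (ell α (n+2)).eval a
        = (2*((n:ℝ)+1)+1+α - a) * ((-1:ℝ)^(n+1) * (ell α (n+1)).eval a)
          - (((n:ℝ)+1)*(((n:ℝ)+1)+α)) * ((-1:ℝ)^n * (ell α n).eval a) := by
      rw [E]; ring
    push_cast [key]
    nlinarith [mul_le_mul_of_nonneg_left h1 (by positivity : (0:ℝ) ≤ (n:ℝ)+1),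
      mul_pos (by linarith : (0:ℝ) < -a) hpos, h0, hpos]

lemma ell_eval_ne (hα : -1 < α) (ha : a < 0) (n : ℕ) : (ell α n).eval a ≠ 0 := by
  have := (ell_eval_pos hα ha n).1
  intro h; rw [h] at this; simp at this



/-- the weighted moment functional -/
noncomputable def Iw (α : ℝ) (p : Polynomial ℝ) : ℝ :=
  ∫ x in Ioi (0:ℝ), p.eval x * (x ^ α * Real.exp (-x))

lemma integrable_poly (hα : -1 < α) (p : Polynomial ℝ) :
    IntegrableOn (fun x => p.eval x * (x ^ α * Real.exp (-x))) (Ioi (0:ℝ)) := by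
  induction p using Polynomial.induction_on' with
  | add p q hp hq =>
    have h := hp.add hq
    refine h.congr (Filter.EventuallyEq.of_eq ?_)
    funext x; simp [eval_add]; ring
  | monomial n c =>
    have h1 : (0:ℝ) < (n:ℝ) + α + 1 := by
      have : (0:ℝ) ≤ n := Nat.cast_nonneg n
      linarith
    have h := ((Real.GammaIntegral_convergent h1).const_mul c)
    refine IntegrableOn.congr_fun h ?_ measurableSet_Ioi
    intro x hx
    have hx0 : (0:ℝ) < x := hx
    have hxn : x ^ ((n:ℝ) + α + 1 - 1) = x ^ (n:ℕ) * x ^ α := by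
      rw [add_sub_cancel_right, Real.rpow_add hx0, Real.rpow_natCast]
    simp only [eval_monomial]
    rw [hxn]; ring

lemma Iw_add (hα : -1 < α) (p q : Polynomial ℝ) : Iw α (p + q) = Iw α p + Iw α q := by
  unfold Iw
  rw [← integral_add (integrable_poly hα p) (integrable_poly hα q)]
  congr 1; funext x; simp [eval_add]; ring

lemma Iw_smul (c : ℝ) (p : Polynomial ℝ) : Iw α (C c * p) = c * Iw α p := by
  unfold Iw
  rw [← integral_const_mul]
  congr 1; funext x; simp [eval_mul]; ring

lemma Iw_pow (hα : -1 < α) (n : ℕ) : Iw α (X ^ n) = Real.Gamma ((n:ℝ) + α + 1) := by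
  have h1 : (0:ℝ) < (n:ℝ) + α + 1 := by
    have : (0:ℝ) ≤ n := Nat.cast_nonneg n
    linarith
  rw [Real.Gamma_eq_integral h1]
  unfold Iw
  refine setIntegral_congr_fun measurableSet_Ioi ?_
  intro x hx
  have hx0 : (0:ℝ) < x := hx
  have hxn : x ^ ((n:ℝ) + α + 1 - 1) = x ^ (n:ℕ) * x ^ α := by
    rw [add_sub_cancel_right, Real.rpow_add hx0, Real.rpow_natCast]
  simp only [eval_pow, eval_X]
  rw [hxn]; ring

lemma Iw_pow_pos (hα : -1 < α) (n : ℕ) : 0 < Iw α (X ^ n) := by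
  rw [Iw_pow hα]
  apply Real.Gamma_pos_of_pos
  have : (0:ℝ) ≤ n := Nat.cast_nonneg n
  linarith

lemma Iw_pow_succ (hα : -1 < α) (n : ℕ) :
    Iw α (X ^ (n+1)) = ((n:ℝ) + α + 1) * Iw α (X ^ n) := by
  rw [Iw_pow hα, Iw_pow hα]
  have h1 : ((n:ℝ) + α + 1) ≠ 0 := by
    have : (0:ℝ) ≤ n := Nat.cast_nonneg n
    intro h; linarith [hα]
  have := Real.Gamma_add_one h1
  push_cast
  rw [show (n:ℝ) + 1 + α + 1 = ((n:ℝ) + α + 1) + 1 by ring, this]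

/-- the integration-by-parts identity, proved via the Gamma recurrence and linearity -/
lemma Iw_ibp (hα : -1 < α) (p : Polynomial ℝ) :
    Iw α (X * derivative p) = Iw α (X * p) - (α + 1) * Iw α p := by
  induction p using Polynomial.induction_on' with
  | add p q hp hq =>
    rw [derivative_add, mul_add, mul_add, Iw_add hα, Iw_add hα, Iw_add hα, hp, hq]; ring
  | monomial n c =>
    have e1 : X * derivative (monomial n c : Polynomial ℝ) = C ((n:ℝ) * c) * X ^ n := by
      rw [derivative_monomial]
      cases n with
      | zero => simp
      | succ m =>
        rw [X_mul_monomial, ← C_mul_X_pow_eq_monomial, mul_comm c]; norm_num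
    have e2 : X * (monomial n c : Polynomial ℝ) = C c * X ^ (n+1) := by
      rw [X_mul_monomial, ← C_mul_X_pow_eq_monomial]
    have e3 : (monomial n c : Polynomial ℝ) = C c * X ^ n := (C_mul_X_pow_eq_monomial).symm
    rw [e1, e2, e3, Iw_smul, Iw_smul, Iw_smul, Iw_pow_succ hα]
    ring


lemma Iw_zero : Iw α 0 = 0 := by simp [Iw]

lemma Iw_sub (hα : -1 < α) (p q : Polynomial ℝ) : Iw α (p - q) = Iw α p - Iw α q := by
  have h1 : p - q = p + C (-1) * q := by rw [map_neg, map_one]; ring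
  rw [h1, Iw_add hα, Iw_smul]; ring

lemma X_deriv_mul_pow (q : Polynomial ℝ) (m : ℕ) :
    X * derivative (q * X ^ m) = (X * derivative q) * X ^ m + C (m:ℝ) * (q * X ^ m) := by
  cases m with
  | zero => simp
  | succ k =>
    rw [derivative_mul, derivative_X_pow]
    push_cast
    ring

/-- the key moment recurrence `u_{n+1,m} = (m-n) u_{n,m}` -/
lemma u_step (hα : -1 < α) : ∀ n m : ℕ,
    Iw α (ell α (n+1) * X ^ m) = ((m:ℝ) - n) * Iw α (ell α n * X ^ m) := by
  intro n m
  have hder := ell_deriv α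
  -- the "ibp" consequence for p = ell α n * X ^ m, n ≥ 1 handled via poly identity
  cases n with
  | zero =>
    have e : ell α 1 * X ^ m = X ^ (m+1) + C (-(1+α)) * X ^ m := by
      show (X - C (1+α)) * X ^ m = _
      rw [map_neg]; ring
    rw [e, Iw_add hα, Iw_smul, Iw_pow_succ hα]
    show _ = ((m:ℝ) - (0:ℕ)) * Iw α (1 * X ^ m)
    rw [one_mul]; push_cast; ring
  | succ n =>
    -- polynomial identity: X * derivative (ℓ_{n+1} X^m) = C(n+1+m) ℓ_{n+1}X^m + C(c) ℓ_n X^m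
    have P1 : X * derivative (ell α (n+1) * X ^ m)
        = C ((n:ℝ)+1+(m:ℝ)) * (ell α (n+1) * X ^ m)
          + C (((n:ℝ)+1)*(((n:ℝ)+1)+α)) * (ell α n * X ^ m) := by
      rw [X_deriv_mul_pow, hder n]
      simp only [map_add, map_one]
      ring
    have ibp := Iw_ibp hα (ell α (n+1) * X ^ m)
    rw [P1, Iw_add hα, Iw_smul, Iw_smul] at ibp
    have hXp : X * (ell α (n+1) * X ^ m) = ell α (n+1) * X ^ (m+1) := by ring
    rw [hXp] at ibp
    -- ibp : (n+1+m)*u + c*v = u' - (α+1)*u, i.e. u' = (n+m+α+2)*u + c*v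
    -- TTR: ℓ_{n+2} X^m = ℓ_{n+1} X^{m+1} - b ℓ_{n+1} X^m - c ℓ_n X^m
    have E : ell α (n+2) * X ^ m
        = ell α (n+1) * X ^ (m+1)
          - C (2*((n:ℝ)+1)+1+α) * (ell α (n+1) * X ^ m)
          - C (((n:ℝ)+1)*(((n:ℝ)+1)+α)) * (ell α n * X ^ m) := by
      rw [ell_ttr]; ring
    rw [E, Iw_sub hα, Iw_sub hα, Iw_smul, Iw_smul]
    push_cast
    linarith [ibp]

lemma u_orth (hα : -1 < α) : ∀ n m : ℕ, m < n → Iw α (ell α n * X ^ m) = 0 := by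
  intro n
  induction n with
  | zero => omega
  | succ n ih =>
    intro m hm
    rw [u_step hα]
    rcases Nat.lt_or_ge m n with h | h
    · rw [ih m h, mul_zero]
    · have : m = n := by omega
      subst this; simp

lemma u_norm_pos (hα : -1 < α) : ∀ n m : ℕ, n ≤ m → 0 < Iw α (ell α n * X ^ m) := by
  intro n
  induction n with
  | zero => intro m _; show 0 < Iw α (1 * X ^ m); rw [one_mul]; exact Iw_pow_pos hα m
  | succ n ih =>
    intro m hm
    rw [u_step hα]
    have h1 : 0 < (m:ℝ) - n := by
      have : (n:ℝ) + 1 ≤ m := by exact_mod_cast hm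
      linarith
    exact mul_pos h1 (ih m (by omega))

lemma Iw_sum (hα : -1 < α) {s : Finset ℕ} (f : ℕ → Polynomial ℝ) :
    Iw α (∑ i ∈ s, f i) = ∑ i ∈ s, Iw α (f i) := by
  classical
  induction s using Finset.induction_on with
  | empty => simp [Iw_zero]
  | @insert x s h ih => rw [Finset.sum_insert h, Finset.sum_insert h, Iw_add hα, ih]

/-- orthogonality of `ell n` against lower-degree polynomials -/
lemma Iw_ell_mul (hα : -1 < α) (n : ℕ) (p : Polynomial ℝ) (hdeg : p.degree < n) :
    Iw α (ell α n * p) = 0 := by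
  rcases eq_or_ne p 0 with rfl | hp
  · rw [mul_zero, Iw_zero]
  have hnd : p.natDegree < n := (natDegree_lt_iff_degree_lt hp).mpr (by exact_mod_cast hdeg)
  conv_lhs => rw [p.as_sum_range' n hnd]
  rw [Finset.mul_sum, Iw_sum hα]
  apply Finset.sum_eq_zero
  intro m hm
  have hmn : m < n := Finset.mem_range.mp hm
  have : ell α n * monomial m (p.coeff m) = C (p.coeff m) * (ell α n * X ^ m) := by
    rw [← C_mul_X_pow_eq_monomial]; ring
  rw [this, Iw_smul, u_orth hα n m hmn, mul_zero]

lemma ell_degree_lt (k n : ℕ) (h : k < n) : (ell α k).degree < (n : ℕ) := by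
  have h1 : (ell α k).degree ≤ k := by
    have := degree_le_natDegree (p := ell α k)
    rwa [(ell_monic α k).2] at this
  exact lt_of_le_of_lt h1 (by exact_mod_cast WithBot.coe_lt_coe.mpr h)

lemma ell_orth (hα : -1 < α) (m k : ℕ) (h : m ≠ k) : Iw α (ell α m * ell α k) = 0 := by
  rcases Nat.lt_or_ge m k with hlt | hge
  · rw [mul_comm]; exact Iw_ell_mul hα k _ (ell_degree_lt m k hlt)
  · have hlt : k < m := by omega
    exact Iw_ell_mul hα m _ (ell_degree_lt k m hlt)

/-- positivity of the weighted square integral, with an extra positive polynomial factor `g` -/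
lemma Iw_sq_pos (hα : -1 < α) (g : Polynomial ℝ) (hg : ∀ x : ℝ, 0 < x → 0 < g.eval x)
    (p : Polynomial ℝ) (hp : p ≠ 0) : 0 < Iw α (g * (p * p)) := by
  unfold Iw
  set f : ℝ → ℝ := fun x => (g * (p * p)).eval x * (x ^ α * Real.exp (-x)) with hf
  have hnonneg : 0 ≤ᵐ[volume.restrict (Ioi (0:ℝ))] f := by
    rw [EventuallyLE, ae_restrict_iff' measurableSet_Ioi]
    refine Eventually.of_forall (fun x hx => ?_)
    have hx0 : (0:ℝ) < x := hx
    simp only [hf, eval_mul, Pi.zero_apply]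
    have h1 : 0 ≤ (p.eval x) * (p.eval x) := mul_self_nonneg _
    have h2 : 0 < x ^ α * Real.exp (-x) :=
      mul_pos (Real.rpow_pos_of_pos hx0 α) (Real.exp_pos _)
    have h3 := (hg x hx0).le
    positivity
  have hint : IntegrableOn f (Ioi (0:ℝ)) := integrable_poly hα _
  apply (setIntegral_pos_iff_support_of_nonneg_ae hnonneg hint).mpr
  have hg0 : g ≠ 0 := fun h => by simpa [h] using hg 1 one_pos
  have hgpp : g * (p * p) ≠ 0 := mul_ne_zero hg0 (mul_ne_zero hp hp)
  have hroots : ({x : ℝ | (g * (p * p)).IsRoot x}).Finite := finite_setOf_isRoot hgpp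
  have hsub : Ioi (0:ℝ) \ {x : ℝ | (g * (p * p)).IsRoot x} ⊆ Function.support f ∩ Ioi 0 := by
    rintro x ⟨hx, hroot⟩
    refine ⟨?_, hx⟩
    have hx0 : (0:ℝ) < x := hx
    have h2 : x ^ α * Real.exp (-x) ≠ 0 :=
      (mul_pos (Real.rpow_pos_of_pos hx0 α) (Real.exp_pos _)).ne'
    simp only [Function.mem_support, hf]
    exact mul_ne_zero (fun h => hroot h) h2
  calc (0:ℝ≥0∞) < volume (Ioi (0:ℝ) \ {x : ℝ | (g * (p * p)).IsRoot x}) := by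
        rw [measure_diff_null (hroots.measure_zero volume), Real.volume_Ioi]
        exact ENNReal.zero_lt_top
    _ ≤ volume (Function.support f ∩ Ioi 0) := measure_mono hsub

section Uniq

variable (T : Polynomial ℝ → ℝ)
  (Tadd : ∀ p q, T (p + q) = T p + T q)
  (Tsmul : ∀ c p, T (C c * p) = c * T p)

include Tadd Tsmul

lemma T_zero : T 0 = 0 := by
  have := Tsmul 0 0
  simpa using this

lemma T_sub (p q : Polynomial ℝ) : T (p - q) = T p - T q := by
  have h1 : p - q = p + C (-1) * q := by rw [map_neg, map_one]; ring
  rw [h1, Tadd, Tsmul]; ring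

/-- span argument: if `d` is `T`-orthogonal to each `G k`, `k < n`,
for a monic triangular family `G`, then it is orthogonal to all of degree `< n`. -/
lemma T_span (G : ℕ → Polynomial ℝ) (hGm : ∀ m, (G m).Monic) (hGd : ∀ m, (G m).natDegree = m)
    (d : Polynomial ℝ) (n : ℕ) (hd : ∀ k, k < n → T (d * G k) = 0) :
    ∀ q : Polynomial ℝ, q.degree < n → T (d * q) = 0 := by
  suffices H : ∀ N : ℕ, ∀ q : Polynomial ℝ, q.natDegree ≤ N → q.degree < n → T (d * q) = 0 by
    intro q hq; exact H q.natDegree q le_rfl hq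
  intro N
  induction N with
  | zero =>
    intro q hq hdeg
    rcases eq_or_ne q 0 with rfl | hq0
    · rw [mul_zero]; exact T_zero T Tadd Tsmul
    have hn : 0 < n := by
      rcases Nat.eq_zero_or_pos n with rfl | h
      · exact absurd (by simpa using hdeg) hq0
      · exact h
    have hq' : q = C (q.coeff 0) := eq_C_of_natDegree_le_zero hq
    have hG0 : G 0 = 1 := (hGm 0).natDegree_eq_zero.mp (hGd 0)
    calc T (d * q) = T (C (q.coeff 0) * (d * G 0)) := by rw [hG0, mul_one, ← hq']; ring_nf
      _ = q.coeff 0 * T (d * G 0) := Tsmul _ _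
      _ = 0 := by rw [hd 0 hn, mul_zero]
  | succ N ih =>
    intro q hq hdeg
    rcases eq_or_ne q 0 with rfl | hq0
    · rw [mul_zero]; exact T_zero T Tadd Tsmul
    rcases Nat.lt_or_ge q.natDegree (N+1) with h | h
    · exact ih q (by omega) hdeg
    have hqd : q.natDegree = N + 1 := le_antisymm hq h
    have hjn : N + 1 < n := by
      have := (natDegree_lt_iff_degree_lt hq0).mpr (by exact_mod_cast hdeg)
      omega
    have hlc : q.leadingCoeff ≠ 0 := leadingCoeff_ne_zero.mpr hq0
    set q' := q - C q.leadingCoeff * G (N+1) with hq'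
    have hCG : (C q.leadingCoeff * G (N+1)).degree = q.degree := by
      rw [degree_C_mul hlc, degree_eq_natDegree (hGm (N+1)).ne_zero, hGd,
        degree_eq_natDegree hq0, hqd]
    have hdegq' : q'.degree < q.degree := by
      apply degree_sub_lt hCG.symm hq0
      rw [leadingCoeff_mul, leadingCoeff_C, (hGm (N+1)).leadingCoeff, mul_one]
    have hq'nd : q'.natDegree ≤ N := by
      rcases eq_or_ne q' 0 with h0 | h0
      · simp [h0]
      have := natDegree_lt_natDegree h0 hdegq'
      omega
    have hq'deg : q'.degree < n := lt_trans hdegq' hdeg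
    have e : d * q = d * q' + C q.leadingCoeff * (d * G (N+1)) := by rw [hq']; ring
    rw [e, Tadd, Tsmul, ih q' hq'nd hq'deg, hd (N+1) hjn, mul_zero, add_zero]

lemma T_uniq (Tpos : ∀ p, p ≠ 0 → 0 < T (p * p))
    (F G : ℕ → Polynomial ℝ)
    (hFm : ∀ m, (F m).Monic) (hFd : ∀ m, (F m).natDegree = m)
    (hGm : ∀ m, (G m).Monic) (hGd : ∀ m, (G m).natDegree = m)
    (hF : ∀ m k, m ≠ k → T (F m * F k) = 0) (hG : ∀ m k, m ≠ k → T (G m * G k) = 0) :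
    ∀ n, F n = G n := by
  intro n
  induction n using Nat.strong_induction_on with
  | _ n ih =>
    by_contra hne
    set d := F n - G n with hdd
    have hd0 : d ≠ 0 := sub_ne_zero.mpr hne
    have hddeg : d.degree < n := by
      have hdeg1 : (F n).degree = (G n).degree := by
        rw [degree_eq_natDegree (hFm n).ne_zero, degree_eq_natDegree (hGm n).ne_zero,
          hFd, hGd]
      have := degree_sub_lt hdeg1 (hFm n).ne_zero
        (by rw [(hFm n).leadingCoeff, (hGm n).leadingCoeff])
      rwa [degree_eq_natDegree (hFm n).ne_zero, hFd n] at this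
    have horth : ∀ k, k < n → T (d * G k) = 0 := by
      intro k hk
      have e : d * G k = F n * F k - G n * G k := by
        rw [hdd, ih k hk]; ring
      rw [e, T_sub T Tadd Tsmul, hF n k (by omega), hG n k (by omega), sub_zero]
    have := T_span T Tadd Tsmul G hGm hGd d n horth d hddeg
    exact absurd this (ne_of_gt (Tpos d hd0))

end Uniq

lemma degree_lt_nat (p : Polynomial ℝ) (k : ℕ) (h : p.natDegree < k) : p.degree < (k:ℕ) :=
  lt_of_le_of_lt degree_le_natDegree (by exact_mod_cast h)

lemma monic_sub_aux (p q : Polynomial ℝ) (hp : p.Monic) (c : ℝ)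
    (hq : q.natDegree < p.natDegree) :
    (p - C c * q).Monic ∧ (p - C c * q).natDegree = p.natDegree := by
  have hdeg : (C c * q).degree < p.degree := by
    calc (C c * q).degree ≤ (C c).degree + q.degree := degree_mul_le _ _
      _ ≤ 0 + (q.natDegree : WithBot ℕ) := add_le_add degree_C_le degree_le_natDegree
      _ < p.degree := by
          rw [zero_add, degree_eq_natDegree hp.ne_zero]
          exact_mod_cast hq
  refine ⟨hp.sub_of_left hdeg, ?_⟩
  apply natDegree_eq_of_degree_eq_some
  rw [degree_sub_eq_left_of_degree_lt hdeg, degree_eq_natDegree hp.ne_zero]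

variable (α) (a : ℝ)

/-- ratio of consecutive Laguerre values at `a` -/
noncomputable def rr (n : ℕ) : ℝ := (ell α (n+1)).eval a / (ell α n).eval a

/-- the kernel (Christoffel) polynomials -/
noncomputable def kq (n : ℕ) : Polynomial ℝ :=
  (ell α (n+1) - C (rr α a n) * ell α n) /ₘ (X - C a)

variable {α a}

lemma kq_num (hα : -1 < α) (ha : a < 0) (n : ℕ) :
    (X - C a) * kq α a n = ell α (n+1) - C (rr α a n) * ell α n := by
  apply (mul_divByMonic_eq_iff_isRoot).mpr
  show eval a _ = 0
  rw [eval_sub, eval_mul, eval_C, rr, div_mul_cancel₀ _ (ell_eval_ne hα ha n), sub_self]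

lemma kq_num_monic (n : ℕ) :
    (ell α (n+1) - C (rr α a n) * ell α n).Monic ∧
    (ell α (n+1) - C (rr α a n) * ell α n).natDegree = n + 1 := by
  have h := monic_sub_aux (ell α (n+1)) (ell α n) (ell_monic α (n+1)).1 (rr α a n)
    (by rw [(ell_monic α n).2, (ell_monic α (n+1)).2]; omega)
  exact ⟨h.1, by rw [h.2, (ell_monic α (n+1)).2]⟩

lemma kq_monic (hα : -1 < α) (ha : a < 0) (n : ℕ) :
    (kq α a n).Monic ∧ (kq α a n).natDegree = n := by
  have hnum := kq_num_monic (α := α) (a := a) n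
  have hprod := kq_num hα ha n
  have hm : (kq α a n).Monic := by
    have : ((X - C a) * kq α a n).leadingCoeff = 1 := by rw [hprod]; exact hnum.1
    rwa [leadingCoeff_mul, (monic_X_sub_C a).leadingCoeff, one_mul] at this
  refine ⟨hm, ?_⟩
  have hne : kq α a n ≠ 0 := hm.ne_zero
  have : ((X - C a) * kq α a n).natDegree = n + 1 := by rw [hprod]; exact hnum.2
  rw [natDegree_mul (X_sub_C_ne_zero a) hne, natDegree_X_sub_C] at this
  omega

variable (α a) in
/-- the modified (Christoffel-transformed) moment functional -/
noncomputable def Jw (p : Polynomial ℝ) : ℝ := Iw α ((X - C a) * p)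

lemma Jw_add (hα : -1 < α) (p q : Polynomial ℝ) :
    Jw α a (p + q) = Jw α a p + Jw α a q := by
  unfold Jw; rw [mul_add, Iw_add hα]

lemma Jw_smul (c : ℝ) (p : Polynomial ℝ) : Jw α a (C c * p) = c * Jw α a p := by
  unfold Jw
  rw [show (X - C a) * (C c * p) = C c * ((X - C a) * p) by ring, Iw_smul]

lemma Iw_pos (hα : -1 < α) (p : Polynomial ℝ) (hp : p ≠ 0) : 0 < Iw α (p * p) := by
  have := Iw_sq_pos hα 1 (fun x _ => by simp) p hp
  rwa [one_mul] at this

lemma Jw_pos (hα : -1 < α) (ha : a < 0) (p : Polynomial ℝ) (hp : p ≠ 0) :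
    0 < Jw α a (p * p) := by
  apply Iw_sq_pos hα (X - C a) (fun x hx => ?_) p hp
  simp only [eval_sub, eval_X, eval_C]
  linarith

lemma kq_orth (hα : -1 < α) (ha : a < 0) (m k : ℕ) (h : m ≠ k) :
    Jw α a (kq α a m * kq α a k) = 0 := by
  -- reduce to the case m < k
  have key : ∀ m k : ℕ, m < k → Jw α a (kq α a m * kq α a k) = 0 := by
    intro m k hmk
    unfold Jw
    rw [show (X - C a) * (kq α a m * kq α a k) = ((X - C a) * kq α a k) * kq α a m by ring,
      kq_num hα ha k,
      show (ell α (k+1) - C (rr α a k) * ell α k) * kq α a m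
        = ell α (k+1) * kq α a m - C (rr α a k) * (ell α k * kq α a m) by ring,
      Iw_sub hα, Iw_smul]
    have hdm : (kq α a m).natDegree = m := (kq_monic hα ha m).2
    rw [Iw_ell_mul hα (k+1) _ (degree_lt_nat _ _ (by omega)),
      Iw_ell_mul hα k _ (degree_lt_nat _ _ (by omega)), mul_zero, sub_zero]
  rcases Nat.lt_or_ge m k with hlt | hge
  · exact key m k hlt
  · rw [mul_comm]; exact key k m (by omega)

lemma rr_rec (hα : -1 < α) (ha : a < 0) (m : ℕ) :
    rr α a (m+1) * rr α a m
      = (a - (2*(m:ℝ)+3+α)) * rr α a m - ((m:ℝ)+1)*((m:ℝ)+1+α) := by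
  have e0 := ell_eval_ne hα ha m
  have e1 := ell_eval_ne hα ha (m+1)
  have hE2 := congrArg (Polynomial.eval a) (ell_ttr α m)
  simp only [eval_sub, eval_mul, eval_add, eval_X, eval_C] at hE2
  unfold rr
  field_simp
  push_cast at hE2 ⊢
  linear_combination hE2

end S18

open S18 in
/-- Structure relation for the Christoffel (kernel) polynomials of
the Laguerre weight, for `a < 0`: with `a_n = L_{n+1}^α(a)/L_n^α(a)`,
`φ(x)·(p_n*(a;x))′ = A(x,n)·p_n*(a;x) + B(x,n)·p_{n−1}*(a;x)` where
`φ(x) = (x−a)x`, `A(x,n) = n[x − (n+1+a_n)(1 + (n+α)/a_{n−1})]`, and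
`B(x,n) = (n(n+α)/a_{n−1})·[a_n·x − (n+1+a_n)(n+1+a_n+α)]`. -/
theorem stmt_18 (α : ℝ) (hα : -1 < α) (a : ℝ) (ha : a < 0)
    (L ps : ℕ → Polynomial ℝ)
    (hLm : ∀ m, (L m).Monic) (hLd : ∀ m, (L m).natDegree = m)
    (hLorth : ∀ m k, m ≠ k → ∫ x in Set.Ioi (0 : ℝ),
      (L m).eval x * (L k).eval x * (x ^ α * Real.exp (-x)) = 0)
    (hpsm : ∀ m, (ps m).Monic) (hpsd : ∀ m, (ps m).natDegree = m)
    (hpsorth : ∀ m k, m ≠ k → ∫ x in Set.Ioi (0 : ℝ),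
      (x - a) * ((ps m).eval x * (ps k).eval x) * (x ^ α * Real.exp (-x)) = 0)
    (n : ℕ) (hn : 1 ≤ n) :
    let an : ℕ → ℝ := fun m => (L (m + 1)).eval a / (L m).eval a
    ((X - C a) * X) * derivative (ps n)
      = (C (n : ℝ) * (X - C (((n : ℝ) + 1 + an n) * (1 + ((n : ℝ) + α) / an (n - 1)))))
          * ps n
        + (C ((n : ℝ) * ((n : ℝ) + α) / an (n - 1))
            * (C (an n) * X
              - C (((n : ℝ) + 1 + an n) * ((n : ℝ) + 1 + an n + α))))
          * ps (n - 1) := by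
  intro an
  have hI : ∀ m k, m ≠ k → Iw α (L m * L k) = 0 := by
    intro m k h
    unfold Iw
    simp_rw [eval_mul]
    exact hLorth m k h
  have hJ : ∀ m k, m ≠ k → Jw α a (ps m * ps k) = 0 := by
    intro m k h
    unfold Jw Iw
    simp_rw [eval_mul, eval_sub, eval_X, eval_C]
    exact hpsorth m k h
  have hL : ∀ j, L j = ell α j :=
    T_uniq (Iw α) (Iw_add hα) Iw_smul (Iw_pos hα) L (ell α) hLm hLd
      (fun j => (ell_monic α j).1) (fun j => (ell_monic α j).2) hI (ell_orth hα)
  have hps : ∀ j, ps j = kq α a j :=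
    T_uniq (Jw α a) (Jw_add hα) Jw_smul (Jw_pos hα ha) ps (kq α a) hpsm hpsd
      (fun j => (kq_monic hα ha j).1) (fun j => (kq_monic hα ha j).2) hJ (kq_orth hα ha)
  have han : ∀ k, an k = rr α a k := by
    intro k
    show (L (k+1)).eval a / (L k).eval a = _
    rw [hL, hL]; rfl
  obtain ⟨m, rfl⟩ : ∃ m, n = m + 1 := ⟨n - 1, by omega⟩
  simp only [Nat.add_sub_cancel]
  rw [hps, hps, han, han]
  push_cast
  set A1 := rr α a (m+1) with hA1def
  set A0 := rr α a m with hA0def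
  have hA0 : A0 ≠ 0 := div_ne_zero (ell_eval_ne hα ha (m+1)) (ell_eval_ne hα ha m)
  have hCA0 : (C A0 : Polynomial ℝ) ≠ 0 := fun h => hA0 (by simpa using h)
  -- the structural equations
  have hk1 := kq_num hα ha (m+1)
  have hk0 := kq_num hα ha m
  rw [← hA1def] at hk1
  rw [← hA0def] at hk0
  have hd1 := congrArg derivative hk1
  simp only [derivative_mul, derivative_sub, derivative_X, derivative_C, zero_mul,
    one_mul, sub_zero, zero_add, zero_sub] at hd1
  have hx2 := ell_deriv α (m+1)
  have hx1 := ell_deriv α m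
  have E := ell_ttr α m
  have hrec := rr_rec hα ha m
  rw [← hA1def, ← hA0def] at hrec
  have hrecP := congrArg (C : ℝ →+* Polynomial ℝ) hrec
  have hD : C (((m:ℝ)+1+α)/A0) * C A0 = C ((m:ℝ)+1+α) := by
    rw [← C_mul, div_mul_cancel₀ _ hA0]
  have hS0 : C (((m:ℝ)+1)*((m:ℝ)+1+α)/A0) * C A0 = C (((m:ℝ)+1)*((m:ℝ)+1+α)) := by
    rw [← C_mul, div_mul_cancel₀ _ hA0]
  push_cast at hx2 hx1 E hd1 hk1 hk0 ⊢
  simp only [map_mul, map_add, map_sub, map_one, map_ofNat] at hx2 hx1 E hrecP hd1 hk1 hk0 hD hS0 ⊢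
  refine mul_left_cancel₀ (mul_ne_zero hCA0 (X_sub_C_ne_zero a)) ?_
  linear_combination
        ((-1:Polynomial ℝ) * ((X:Polynomial ℝ)) * (C a) * (C A0) + (1:Polynomial ℝ) * ((X:Polynomial ℝ)) * ((X:Polynomial ℝ)) * (C A0)) * hd1
        + ((-1:Polynomial ℝ) * (C a) * (C A0) + (1:Polynomial ℝ) * ((X:Polynomial ℝ)) * (C A0)) * hx2
        + ((1:Polynomial ℝ) * (C a) * (C A0) * (C A1) + (-1:Polynomial ℝ) * ((X:Polynomial ℝ)) * (C A0) * (C A1)) * hx1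
        + ((2:Polynomial ℝ) + (1:Polynomial ℝ) * (C A1) + (2:Polynomial ℝ) * (C A0) + (1:Polynomial ℝ) * (C A0) * (C A1) + (5:Polynomial ℝ) * (C (m:ℝ)) + (2:Polynomial ℝ) * (C (m:ℝ)) * (C A1) + (3:Polynomial ℝ) * (C (m:ℝ)) * (C A0) + (1:Polynomial ℝ) * (C (m:ℝ)) * (C A0) * (C A1) + (4:Polynomial ℝ) * (C (m:ℝ)) * (C (m:ℝ)) + (1:Polynomial ℝ) * (C (m:ℝ)) * (C (m:ℝ)) * (C A1) + (1:Polynomial ℝ) * (C (m:ℝ)) * (C (m:ℝ)) * (C A0) + (1:Polynomial ℝ) * (C (m:ℝ)) * (C (m:ℝ)) * (C (m:ℝ)) + (2:Polynomial ℝ) * (C α) + (1:Polynomial ℝ) * (C α) * (C A1) + (3:Polynomial ℝ) * (C α) * (C (m:ℝ)) + (1:Polynomial ℝ) * (C α) * (C (m:ℝ)) * (C A1) + (1:Polynomial ℝ) * (C α) * (C (m:ℝ)) * (C (m:ℝ)) + (-2:Polynomial ℝ) * ((X:Polynomial ℝ)) * (C A0) + (-1:Polynomial ℝ) * ((X:Polynomial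 ℝ)) * (C (m:ℝ)) * (C A0)) * hk1
        + ((4:Polynomial ℝ) + (4:Polynomial ℝ) * (C A1) + (1:Polynomial ℝ) * (C A1) * (C A1) + (12:Polynomial ℝ) * (C (m:ℝ)) + (10:Polynomial ℝ) * (C (m:ℝ)) * (C A1) + (2:Polynomial ℝ) * (C (m:ℝ)) * (C A1) * (C A1) + (13:Polynomial ℝ) * (C (m:ℝ)) * (C (m:ℝ)) + (8:Polynomial ℝ) * (C (m:ℝ)) * (C (m:ℝ)) * (C A1) + (1:Polynomial ℝ) * (C (m:ℝ)) * (C (m:ℝ)) * (C A1) * (C A1) + (6:Polynomial ℝ) * (C (m:ℝ)) * (C (m:ℝ)) * (C (m:ℝ)) + (2:Polynomial ℝ) * (C (m:ℝ)) * (C (m:ℝ)) * (C (m:ℝ)) * (C A1) + (1:Polynomial ℝ) * (C (m:ℝ)) * (C (m:ℝ)) * (C (m:ℝ)) * (C (m:ℝ)) + (6:Polynomial ℝ) * (C α) + (5:Polynomial ℝ) * (C α) * (C A1) + (1:Polynomial ℝ) * (C α) * (C A1) * (C A1) + (13:Polynomial ℝ) * (C α) * (C (m:ℝ)) + (8:Polynomial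 ℝ) * (C α) * (C (m:ℝ)) * (C A1) + (1:Polynomial ℝ) * (C α) * (C (m:ℝ)) * (C A1) * (C A1) + (9:Polynomial ℝ) * (C α) * (C (m:ℝ)) * (C (m:ℝ)) + (3:Polynomial ℝ) * (C α) * (C (m:ℝ)) * (C (m:ℝ)) * (C A1) + (2:Polynomial ℝ) * (C α) * (C (m:ℝ)) * (C (m:ℝ)) * (C (m:ℝ)) + (2:Polynomial ℝ) * (C α) * (C α) + (1:Polynomial ℝ) * (C α) * (C α) * (C A1) + (3:Polynomial ℝ) * (C α) * (C α) * (C (m:ℝ)) + (1:Polynomial ℝ) * (C α) * (C α) * (C (m:ℝ)) * (C A1) + (1:Polynomial ℝ) * (C α) * (C α) * (C (m:ℝ)) * (C (m:ℝ)) + (-1:Polynomial ℝ) * ((X:Polynomial ℝ)) * (C A1) + (-2:Polynomial ℝ) * ((X:Polynomial ℝ)) * (C (m:ℝ)) * (C A1) + (-1:Polynomial ℝ) * ((X:Polynomial ℝ)) * (C (m:ℝ)) * (C (m:ℝ)) * (C A1) + (-1:Polynomial ℝ) * ((X:Polynomial ℝ)) * (C α) * (C A1) + (-1:Polynomial ℝ)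 * ((X:Polynomial ℝ)) * (C α) * (C (m:ℝ)) * (C A1)) * hk0
        + ((2:Polynomial ℝ) + (1:Polynomial ℝ) * (C A1) + (2:Polynomial ℝ) * (C A0) + (1:Polynomial ℝ) * (C A0) * (C A1) + (5:Polynomial ℝ) * (C (m:ℝ)) + (2:Polynomial ℝ) * (C (m:ℝ)) * (C A1) + (3:Polynomial ℝ) * (C (m:ℝ)) * (C A0) + (1:Polynomial ℝ) * (C (m:ℝ)) * (C A0) * (C A1) + (4:Polynomial ℝ) * (C (m:ℝ)) * (C (m:ℝ)) + (1:Polynomial ℝ) * (C (m:ℝ)) * (C (m:ℝ)) * (C A1) + (1:Polynomial ℝ) * (C (m:ℝ)) * (C (m:ℝ)) * (C A0) + (1:Polynomial ℝ) * (C (m:ℝ)) * (C (m:ℝ)) * (C (m:ℝ)) + (2:Polynomial ℝ) * (C α) + (1:Polynomial ℝ) * (C α) * (C A1) + (3:Polynomial ℝ) * (C α) * (C (m:ℝ)) + (1:Polynomial ℝ) * (C α) * (C (m:ℝ)) * (C A1) + (1:Polynomial ℝ) * (C α) * (C (m:ℝ)) * (C (m:ℝ)) + (-2:Polynomial ℝ)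 * (C a) * (C A0) + (-1:Polynomial ℝ) * (C a) * (C (m:ℝ)) * (C A0)) * E
        + ((-2:Polynomial ℝ) * (C a) * (kq α a (m+1)) + (-1:Polynomial ℝ) * (C a) * (C A1) * (kq α a (m+1)) + (-3:Polynomial ℝ) * (C a) * (C (m:ℝ)) * (kq α a (m+1)) + (-1:Polynomial ℝ) * (C a) * (C (m:ℝ)) * (C A1) * (kq α a (m+1)) + (-1:Polynomial ℝ) * (C a) * (C (m:ℝ)) * (C (m:ℝ)) * (kq α a (m+1)) + (2:Polynomial ℝ) * ((X:Polynomial ℝ)) * (kq α a (m+1)) + (1:Polynomial ℝ) * ((X:Polynomial ℝ)) * (C A1) * (kq α a (m+1)) + (3:Polynomial ℝ) * ((X:Polynomial ℝ)) * (C (m:ℝ)) * (kq α a (m+1)) + (1:Polynomial ℝ) * ((X:Polynomial ℝ)) * (C (m:ℝ)) * (C A1) * (kq α a (m+1)) + (1:Polynomial ℝ) * ((X:Polynomial ℝ)) * (C (m:ℝ)) * (C (m:ℝ)) * (kq α a (m+1))) * hD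
        + ((-4:Polynomial ℝ) * (C a) * (kq α a m) + (-4:Polynomial ℝ) * (C a) * (C A1) * (kq α a m) + (-1:Polynomial ℝ) * (C a) * (C A1) * (C A1) * (kq α a m) + (-4:Polynomial ℝ) * (C a) * (C (m:ℝ)) * (kq α a m) + (-2:Polynomial ℝ) * (C a) * (C (m:ℝ)) * (C A1) * (kq α a m) + (-1:Polynomial ℝ) * (C a) * (C (m:ℝ)) * (C (m:ℝ)) * (kq α a m) + (-2:Polynomial ℝ) * (C a) * (C α) * (kq α a m) + (-1:Polynomial ℝ) * (C a) * (C α) * (C A1) * (kq α a m) + (-1:Polynomial ℝ) * (C a) * (C α) * (C (m:ℝ)) * (kq α a m) + (4:Polynomial ℝ) * ((X:Polynomial ℝ)) * (kq α a m) + (4:Polynomial ℝ) * ((X:Polynomial ℝ)) * (C A1) * (kq α a m) + (1:Polynomial ℝ) * ((X:Polynomial ℝ)) * (C A1) * (C A1) * (kq α a m) + (4:Polynomial ℝ) * ((X:Polynomial ℝ)) * (C (m:ℝ)) * (kq α a m) + (2:Polynomial ℝ) * ((X:Polynomial ℝ)) * (C (m:ℝ)) * (C A1) * (kq α a m) + (1:Polynomial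 ℝ) * ((X:Polynomial ℝ)) * (C (m:ℝ)) * (C (m:ℝ)) * (kq α a m) + (2:Polynomial ℝ) * ((X:Polynomial ℝ)) * (C α) * (kq α a m) + (1:Polynomial ℝ) * ((X:Polynomial ℝ)) * (C α) * (C A1) * (kq α a m) + (1:Polynomial ℝ) * ((X:Polynomial ℝ)) * (C α) * (C (m:ℝ)) * (kq α a m) + (1:Polynomial ℝ) * ((X:Polynomial ℝ)) * (C a) * (C A1) * (kq α a m) + (-1:Polynomial ℝ) * ((X:Polynomial ℝ)) * ((X:Polynomial ℝ)) * (C A1) * (kq α a m)) * hS0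
        + ((-2:Polynomial ℝ) * (ell α (m+1)) + (-2:Polynomial ℝ) * (ell α m) + (-1:Polynomial ℝ) * (C A1) * (ell α (m+1)) + (-1:Polynomial ℝ) * (C A1) * (ell α m) + (-3:Polynomial ℝ) * (C (m:ℝ)) * (ell α (m+1)) + (-5:Polynomial ℝ) * (C (m:ℝ)) * (ell α m) + (-1:Polynomial ℝ) * (C (m:ℝ)) * (C A1) * (ell α (m+1)) + (-2:Polynomial ℝ) * (C (m:ℝ)) * (C A1) * (ell α m) + (-1:Polynomial ℝ) * (C (m:ℝ)) * (C (m:ℝ)) * (ell α (m+1)) + (-4:Polynomial ℝ) * (C (m:ℝ)) * (C (m:ℝ)) * (ell α m) + (-1:Polynomial ℝ) * (C (m:ℝ)) * (C (m:ℝ)) * (C A1) * (ell α m) + (-1:Polynomial ℝ) * (C (m:ℝ)) * (C (m:ℝ)) * (C (m:ℝ)) * (ell α m) + (-2:Polynomial ℝ) * (C α) * (ell α m) + (-1:Polynomial ℝ) * (C α) * (C A1) * (ell α m) + (-3:Polynomial ℝ) * (C α) * (C (m:ℝ)) * (ell α m) + (-1:Polynomial ℝ) * (C α) * (C (m:ℝ))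 * (C A1) * (ell α m) + (-1:Polynomial ℝ) * (C α) * (C (m:ℝ)) * (C (m:ℝ)) * (ell α m) + (2:Polynomial ℝ) * ((X:Polynomial ℝ)) * (ell α (m+1)) + (1:Polynomial ℝ) * ((X:Polynomial ℝ)) * (C (m:ℝ)) * (ell α (m+1))) * hrecP
end
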